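/- arXiv:1811.10387 — 8 statements merged into one kernel-verified Lean document; each statement's English description precedes it below -/
import Mathlib

section
/- Let p > 0, r₀ > 0 and let f : [r₀, ∞) → ℝ be increasing and right-continuous, with Lebesgue–Stieltjes measure df. If the integral ∫_{r₀}^{∞} |f(t)|/t^{p+1} dt is finite, then: (1) limsup_{r→∞} max(f(r),0)/r^p = 0 (in fact f(r)/r^p → 0); (2) the Stieltjes integral ∫_{(r₀,∞)} t^{−p} df(t) is finite; and (3) for every r ≥ r₀ one has the integration-by-parts identity ∫_{(r,∞)} t^{−p} df(t) = −f(r)/r^p + p·∫_{r}^{∞} f(t)/t^{p+1} dt. -/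
open MeasureTheory Filter Set
open scoped ENNReal

-- tail integral of an integrable function tends to 0
lemma tail_tendsto_zero_aux {μ : Measure ℝ} {g : ℝ → ℝ} {a : ℝ}
    (hg : IntegrableOn g (Ioi a) μ) :
    Tendsto (fun r : ℝ => ∫ t in Ioi r, g t ∂μ) atTop (nhds 0) := by
  have h := intervalIntegral_tendsto_integral_Ioi a hg tendsto_id
  have h2 : Tendsto (fun r : ℝ => (∫ t in Ioi a, g t ∂μ) - ∫ t in a..r, g t ∂μ)
      atTop (nhds ((∫ t in Ioi a, g t ∂μ) - ∫ t in Ioi a, g t ∂μ)) :=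
    tendsto_const_nhds.sub h
  rw [sub_self] at h2
  apply h2.congr'
  filter_upwards [eventually_ge_atTop a] with r hr
  rw [intervalIntegral.integral_of_le hr]
  have hsplit : (∫ t in Ioi a, g t ∂μ) = (∫ t in Ioc a r, g t ∂μ) + ∫ t in Ioi r, g t ∂μ := by
    rw [← setIntegral_union (Ioc_disjoint_Ioi le_rfl) measurableSet_Ioi
      (hg.mono_set Ioc_subset_Ioi_self) (hg.mono_set (Ioi_subset_Ioi hr)),
      Ioc_union_Ioi_eq_Ioi hr]
  rw [hsplit]; ring

-- ∫⁻ s in Ici t, ofReal (p * s^(-p-1)) = ofReal (t^(-p))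
lemma lint_rpow_aux {p t : ℝ} (hp : 0 < p) (ht : 0 < t) :
    (∫⁻ s in Ici t, ENNReal.ofReal (p * s ^ (-p - 1))) = ENNReal.ofReal (t ^ (-p)) := by
  rw [setLIntegral_congr (Ioi_ae_eq_Ici (a := t) (μ := volume)).symm]
  rw [← ofReal_integral_eq_lintegral_ofReal]
  · congr 1
    rw [integral_const_mul, integral_Ioi_rpow_of_lt (by linarith) ht]
    have h1 : -p - 1 + 1 = -p := by ring
    rw [h1]
    field_simp
  · exact (integrableOn_Ioi_rpow_of_lt (by linarith) ht).const_mul p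
  · filter_upwards [ae_restrict_mem measurableSet_Ioi] with s hs
    have : (0:ℝ) < s := ht.trans hs
    positivity

lemma key_lintegral {p r₀ : ℝ} (hp : 0 < p) (hr₀ : 0 < r₀) (f : StieltjesFunction ℝ)
    {r : ℝ} (hr : r₀ ≤ r) :
    (∫⁻ t in Ioi r, ENNReal.ofReal (t ^ (-p)) ∂f.measure)
      = ∫⁻ s in Ioi r, ENNReal.ofReal (p * s ^ (-p - 1) * (f s - f r)) := by
  have hrpos : 0 < r := lt_of_lt_of_le hr₀ hr
  set F : ℝ → ℝ → ℝ≥0∞ :=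
    fun t s => (Ici t).indicator (fun s => ENNReal.ofReal (p * s ^ (-p - 1))) s with hF
  have hmeas : Measurable (Function.uncurry F) := by
    have huncurry : Function.uncurry F = fun q : ℝ × ℝ =>
        ({q : ℝ × ℝ | q.1 ≤ q.2}).indicator
          (fun q => ENNReal.ofReal (p * q.2 ^ (-p - 1))) q := by
      ext ⟨t, s⟩
      by_cases h : t ≤ s <;> simp [Function.uncurry, F, indicator, h]
    rw [huncurry]
    exact (ENNReal.measurable_ofReal.comp
      ((measurable_snd.pow_const (-p-1)).const_mul p)).indicator
      (measurableSet_le measurable_fst measurable_snd)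
  have step1 : (∫⁻ t in Ioi r, ENNReal.ofReal (t ^ (-p)) ∂f.measure)
      = ∫⁻ t in Ioi r, (∫⁻ s in Ioi r, F t s) ∂f.measure := by
    apply setLIntegral_congr_fun measurableSet_Ioi
    intro t ht
    beta_reduce
    rw [hF]
    have hsub : Ici t ∩ Ioi r = Ici t :=
      Set.inter_eq_left.mpr (fun s hs => show r < s from lt_of_lt_of_le ht hs)
    rw [lintegral_indicator measurableSet_Ici, Measure.restrict_restrict measurableSet_Ici,
      hsub, lint_rpow_aux hp (hrpos.trans ht)]
  have step2 : (∫⁻ t in Ioi r, (∫⁻ s in Ioi r, F t s) ∂f.measure)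
      = ∫⁻ s in Ioi r, (∫⁻ t in Ioi r, F t s ∂f.measure) :=
    lintegral_lintegral_swap hmeas.aemeasurable
  have step3 : (∫⁻ s in Ioi r, (∫⁻ t in Ioi r, F t s ∂f.measure))
      = ∫⁻ s in Ioi r, ENNReal.ofReal (p * s ^ (-p - 1) * (f s - f r)) := by
    apply setLIntegral_congr_fun measurableSet_Ioi
    intro s hs
    beta_reduce
    have hFs : (fun t => F t s)
        = (Iic s).indicator (fun _ => ENNReal.ofReal (p * s ^ (-p - 1))) := by
      funext t
      by_cases h : t ≤ s <;> simp [F, indicator, h]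
    rw [hFs, lintegral_indicator_const measurableSet_Iic,
      Measure.restrict_apply measurableSet_Iic, Set.Iic_inter_Ioi,
      StieltjesFunction.measure_Ioc, ← ENNReal.ofReal_mul]
    · have hs0 : (0:ℝ) < s := hrpos.trans hs
      positivity
  rw [step1, step2, step3]

lemma main_aux {p r₀ : ℝ} (hp : 0 < p) (hr₀ : 0 < r₀) (f : StieltjesFunction ℝ)
    (hint : IntegrableOn (fun t : ℝ => |f t| / t ^ (p + 1)) (Ioi r₀) volume)
    {r : ℝ} (hr : r₀ ≤ r) :
    IntegrableOn (fun t : ℝ => t ^ (-p)) (Ioi r) f.measure ∧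
    (∫ t in Ioi r, t ^ (-p) ∂f.measure)
      = -(f r / r ^ p) + p * ∫ t in Ioi r, f t / t ^ (p + 1) := by
  have hrpos : 0 < r := lt_of_lt_of_le hr₀ hr
  have hfm : Measurable f := f.mono.measurable
  have hexp : -p - 1 = -(p + 1) := by ring
  -- integrability of f s * s^(-p-1) on Ioi r₀
  have h1 : IntegrableOn (fun s : ℝ => f s * s ^ (-p - 1)) (Ioi r₀) volume := by
    apply Integrable.mono' hint
      ((hfm.mul (measurable_id.pow_const (-p - 1))).aestronglyMeasurable)
    filter_upwards [ae_restrict_mem measurableSet_Ioi] with s hs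
    have hs0 : (0:ℝ) < s := hr₀.trans hs
    simp only [Pi.mul_apply, norm_mul, Real.norm_eq_abs, id_eq]
    rw [abs_of_nonneg (Real.rpow_nonneg hs0.le _), hexp, Real.rpow_neg hs0.le,
      ← div_eq_mul_inv]
  have h2 : IntegrableOn (fun s : ℝ => s ^ (-p - 1)) (Ioi r₀) volume :=
    integrableOn_Ioi_rpow_of_lt (by linarith) hr₀
  -- the function appearing on the RHS of key_lintegral
  set g : ℝ → ℝ := fun s => p * s ^ (-p - 1) * (f s - f r) with hg
  have hg_eq : g = fun s => p * (f s * s ^ (-p - 1)) - (p * f r) * s ^ (-p - 1) := by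
    funext s; simp only [hg]; ring
  have hg_int : IntegrableOn g (Ioi r) volume := by
    rw [hg_eq]
    exact ((h1.mono_set (Ioi_subset_Ioi hr)).const_mul p).sub
      ((h2.mono_set (Ioi_subset_Ioi hr)).const_mul (p * f r))
  have hg_nonneg : ∀ s ∈ Ioi r, 0 ≤ g s := by
    intro s hs
    have hs0 : (0:ℝ) < s := hrpos.trans hs
    have : f r ≤ f s := f.mono (le_of_lt hs)
    have h3 : (0:ℝ) ≤ p * s ^ (-p - 1) := by positivity
    exact mul_nonneg h3 (by linarith)
  have hg_nonneg_ae : 0 ≤ᵐ[volume.restrict (Ioi r)] g := by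
    filter_upwards [ae_restrict_mem measurableSet_Ioi] with s hs using hg_nonneg s hs
  have hofReal : (∫⁻ s in Ioi r, ENNReal.ofReal (g s))
      = ENNReal.ofReal (∫ s in Ioi r, g s) :=
    (ofReal_integral_eq_lintegral_ofReal hg_int hg_nonneg_ae).symm
  have hkey := key_lintegral hp hr₀ f hr
  -- integrability of t^(-p) w.r.t. f.measure
  have hB : IntegrableOn (fun t : ℝ => t ^ (-p)) (Ioi r) f.measure := by
    refine ⟨(measurable_id.pow_const (-p)).aestronglyMeasurable, ?_⟩
    rw [HasFiniteIntegral]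
    have hcongr : (∫⁻ t in Ioi r, ‖t ^ (-p)‖ₑ ∂f.measure)
        = ∫⁻ t in Ioi r, ENNReal.ofReal (t ^ (-p)) ∂f.measure := by
      apply lintegral_congr_ae
      filter_upwards [ae_restrict_mem measurableSet_Ioi] with t ht
      exact Real.enorm_eq_ofReal (Real.rpow_nonneg (hrpos.trans ht).le _)
    rw [hcongr, hkey, hofReal]
    exact ENNReal.ofReal_lt_top
  refine ⟨hB, ?_⟩
  -- compute the real integral
  have hnn_ae : 0 ≤ᵐ[f.measure.restrict (Ioi r)] fun t : ℝ => t ^ (-p) := by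
    filter_upwards [ae_restrict_mem measurableSet_Ioi] with t ht
    exact Real.rpow_nonneg (hrpos.trans ht).le _
  rw [integral_eq_lintegral_of_nonneg_ae hnn_ae
    ((measurable_id.pow_const (-p)).aestronglyMeasurable), hkey, hofReal,
    ENNReal.toReal_ofReal (setIntegral_nonneg measurableSet_Ioi hg_nonneg)]
  -- split the integral of g
  have intA : IntegrableOn (fun s : ℝ => p * (f s * s ^ (-p - 1))) (Ioi r) volume :=
    (h1.mono_set (Ioi_subset_Ioi hr)).const_mul p
  have intB : IntegrableOn (fun s : ℝ => (p * f r) * s ^ (-p - 1)) (Ioi r) volume :=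
    (h2.mono_set (Ioi_subset_Ioi hr)).const_mul (p * f r)
  have hsplit : (∫ s in Ioi r, g s)
      = p * (∫ s in Ioi r, f s * s ^ (-p - 1)) - (p * f r) * ∫ s in Ioi r, s ^ (-p - 1) := by
    rw [hg_eq, integral_sub intA intB, integral_const_mul, integral_const_mul]
  have hpow : (∫ s in Ioi r, s ^ (-p - 1)) = r ^ (-p) / p := by
    rw [integral_Ioi_rpow_of_lt (by linarith) hrpos]
    have h1' : -p - 1 + 1 = -p := by ring
    rw [h1']
    field_simp
  have hcongr2 : (∫ s in Ioi r, f s * s ^ (-p - 1)) = ∫ s in Ioi r, f s / s ^ (p + 1) := by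
    apply setIntegral_congr_fun measurableSet_Ioi
    intro s hs
    have hs0 : (0:ℝ) < s := hrpos.trans hs
    show f s * s ^ (-p - 1) = f s / s ^ (p + 1)
    rw [hexp, Real.rpow_neg hs0.le, ← div_eq_mul_inv]
  rw [hsplit, hpow, hcongr2]
  have hrp : r ^ (-p) = (r ^ p)⁻¹ := by
    rw [Real.rpow_neg hrpos.le]
  rw [hrp]
  have hrppos : (0:ℝ) < r ^ p := Real.rpow_pos_of_pos hrpos p
  field_simp
  ring


/-- Proposition 1 (i)-(ii) with the integration-by-parts identity, for an increasing
right-continuous function `f` (a Stieltjes function) on `[r₀, ∞)`: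
if `∫_{r₀}^∞ |f(t)|/t^{p+1} dt < ∞`, then `f(r)/r^p → 0` (so the type of `f` at order `p`
near `∞` vanishes), the Stieltjes integral `∫_{(r₀,∞)} t^{-p} df(t)` is finite, and for
every `r ≥ r₀` one has `∫_{(r,∞)} t^{-p} df(t) = -f(r)/r^p + p ∫_r^∞ f(t)/t^{p+1} dt`. -/
theorem convergence_class_at_infty_of_integral
    (p r₀ : ℝ) (hp : 0 < p) (hr₀ : 0 < r₀) (f : StieltjesFunction ℝ)
    (hint : IntegrableOn (fun t : ℝ => |f t| / t ^ (p + 1)) (Ioi r₀) volume) :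
    (Tendsto (fun r : ℝ => f r / r ^ p) atTop (nhds 0) ∧
      limsup (fun r : ℝ => max (f r) 0 / r ^ p) atTop = 0) ∧
    IntegrableOn (fun t : ℝ => t ^ (-p)) (Ioi r₀) f.measure ∧
    ∀ r : ℝ, r₀ ≤ r →
      (∫ t in Ioi r, t ^ (-p) ∂f.measure)
        = -(f r / r ^ p) + p * ∫ t in Ioi r, f t / t ^ (p + 1) := by
  have hfm : Measurable f := f.mono.measurable
  have hA : IntegrableOn (fun t : ℝ => f t / t ^ (p + 1)) (Ioi r₀) volume := by
    apply Integrable.mono' hint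
      ((hfm.div (measurable_id.pow_const (p + 1))).aestronglyMeasurable)
    filter_upwards [ae_restrict_mem measurableSet_Ioi] with s hs
    have hs0 : (0:ℝ) < s := hr₀.trans hs
    simp only [Pi.div_apply, norm_div, Real.norm_eq_abs, id_eq]
    rw [abs_of_nonneg (Real.rpow_nonneg hs0.le _)]
  have hB := (main_aux hp hr₀ f hint le_rfl).1
  have hid : ∀ r : ℝ, r₀ ≤ r → (∫ t in Ioi r, t ^ (-p) ∂f.measure)
      = -(f r / r ^ p) + p * ∫ t in Ioi r, f t / t ^ (p + 1) :=
    fun r hr => (main_aux hp hr₀ f hint hr).2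
  have hTA := tail_tendsto_zero_aux hA
  have hTB := tail_tendsto_zero_aux hB
  have htend : Tendsto (fun r : ℝ => f r / r ^ p) atTop (nhds 0) := by
    have h := (hTA.const_mul p).sub hTB
    rw [mul_zero, sub_zero] at h
    apply h.congr'
    filter_upwards [eventually_ge_atTop r₀] with r hr
    have := hid r hr
    linarith
  refine ⟨⟨htend, ?_⟩, hB, hid⟩
  have h2 : Tendsto (fun r : ℝ => max (f r) 0 / r ^ p) atTop (nhds 0) := by
    have h := htend.max (tendsto_const_nhds (x := (0:ℝ)))
    rw [max_self] at h
    apply h.congr'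
    filter_upwards [eventually_gt_atTop (0:ℝ)] with r hr
    have hrp : (0:ℝ) < r ^ p := Real.rpow_pos_of_pos hr p
    rw [show max (f r / r ^ p) 0 = max (f r / r ^ p) (0 / r ^ p) by rw [zero_div],
      max_div_div_right hrp.le]
  exact h2.limsup_eq
end

section
/- Let r₀ > 0 and let f : [r₀, ∞) → ℝ be increasing and right-continuous, with Lebesgue–Stieltjes measure df. (1) If p > 0 and the Stieltjes integral ∫_{(r₀,∞)} t^{−p} df(t) is finite, then limsup_{r→∞} max(f(r),0)/r^p = 0 and ∫_{r₀}^{∞} |f(t)|/t^{p+1} dt < ∞, and for every r ≥ r₀ one has ∫_{(r,∞)} t^{−p} df(t) = −f(r)/r^p + p·∫_{r}^{∞} f(t)/t^{p+1} dt. (2) If p = 0 and the total Stieltjes mass df((r₀,∞)) is finite, then the limit lim_{r→∞} f(r) exists and is finite. -/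
open MeasureTheory Filter Set Real Topology

private lemma kernel_int {p t : ℝ} (hp : 0 < p) (ht : 0 < t) :
    ∫⁻ s in Ioi t, ENNReal.ofReal (p * s ^ (-(p+1))) = ENNReal.ofReal (t ^ (-p)) := by
  have h1 : (-(p+1) : ℝ) < -1 := by linarith
  have hint : IntegrableOn (fun s : ℝ => p * s ^ (-(p+1))) (Ioi t) :=
    (integrableOn_Ioi_rpow_of_lt h1 ht).const_mul p
  rw [← ofReal_integral_eq_lintegral_ofReal hint]
  · rw [MeasureTheory.integral_const_mul, integral_Ioi_rpow_of_lt h1 ht]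
    congr 1
    have h2 : (-(p+1) : ℝ) + 1 = -p := by ring
    rw [h2]
    field_simp
  · filter_upwards [ae_restrict_mem measurableSet_Ioi] with s hs
    exact mul_nonneg hp.le (rpow_nonneg (ht.trans hs).le _)

private lemma stieltjes_tonelli (f : StieltjesFunction ℝ) {p r : ℝ} (hp : 0 < p) (hr : 0 < r) :
    ∫⁻ t in Ioi r, ENNReal.ofReal (t ^ (-p)) ∂f.measure
      = ∫⁻ s in Ioi r, ENNReal.ofReal (p * s ^ (-(p+1)) * (f s - f r)) := by
  set μ := f.measure
  set k : ℝ → ENNReal := fun s => ENNReal.ofReal (p * s ^ (-(p+1))) with hk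
  have hkm : Measurable k := by fun_prop
  set F : ℝ → ℝ → ENNReal := fun t s => if t < s then k s else 0 with hF
  have hFm : Measurable (Function.uncurry F) := by
    apply Measurable.ite (measurableSet_lt measurable_fst measurable_snd)
      (hkm.comp measurable_snd) measurable_const
  have step1 : ∀ t ∈ Ioi r, ENNReal.ofReal (t ^ (-p)) = ∫⁻ s, F t s := by
    intro t ht
    have : F t = (Ioi t).indicator k := by
      funext s; simp [hF, indicator, mem_Ioi]
    rw [this, lintegral_indicator measurableSet_Ioi, kernel_int hp (hr.trans ht)]
  calc ∫⁻ t in Ioi r, ENNReal.ofReal (t ^ (-p)) ∂μ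
      = ∫⁻ t in Ioi r, (∫⁻ s, F t s) ∂μ :=
        setLIntegral_congr_fun measurableSet_Ioi step1
    _ = ∫⁻ s, (∫⁻ t in Ioi r, F t s ∂μ) := lintegral_lintegral_swap hFm.aemeasurable
    _ = ∫⁻ s, k s * μ (Ioo r s) := by
        congr 1; funext s
        have : ∀ t : ℝ, F t s = (Iio s).indicator (fun _ => k s) t := by
          intro t; simp [hF, indicator, mem_Iio]
        simp_rw [this]
        rw [lintegral_indicator measurableSet_Iio, setLIntegral_const,
          Measure.restrict_apply measurableSet_Iio]
        congr 1
        rw [Set.inter_comm, Set.Ioi_inter_Iio]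
    _ = ∫⁻ s, (Ioi r).indicator (fun s => k s * μ (Ioo r s)) s := by
        congr 1; funext s
        by_cases hs : r < s
        · simp [Set.indicator_apply, mem_Ioi, hs]
        · simp [Set.indicator_apply, mem_Ioi, hs, Ioo_eq_empty hs]
    _ = ∫⁻ s in Ioi r, k s * μ (Ioo r s) := lintegral_indicator measurableSet_Ioi _
    _ = ∫⁻ s in Ioi r, ENNReal.ofReal (p * s ^ (-(p+1)) * (f s - f r)) := by
        have hcount : (volume : Measure ℝ) {x | Function.leftLim f x ≠ f x} = 0 :=
          Set.Countable.measure_zero f.countable_leftLim_ne _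
        refine lintegral_congr_ae ?_
        filter_upwards [ae_restrict_mem measurableSet_Ioi,
          ae_restrict_of_ae (measure_eq_zero_iff_ae_notMem.mp hcount)] with s hs hll
        have hll' : Function.leftLim f s = f s := by simpa using hll
        rw [StieltjesFunction.measure_Ioo, hll',
          ← ENNReal.ofReal_mul (mul_nonneg hp.le (rpow_nonneg (hr.trans hs).le _))]

private lemma main_key (r₀ : ℝ) (hr₀ : 0 < r₀) (f : StieltjesFunction ℝ) (p : ℝ) (hp : 0 < p)
    (hint : IntegrableOn (fun t : ℝ => t ^ (-p)) (Ioi r₀) f.measure)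
    (r : ℝ) (hr : r₀ ≤ r) :
    IntegrableOn (fun s : ℝ => p * s ^ (-(p+1)) * (f s - f r)) (Ioi r) volume ∧
    (∫ t in Ioi r, t ^ (-p) ∂f.measure)
      = ∫ s in Ioi r, p * s ^ (-(p+1)) * (f s - f r) := by
  set μ := f.measure
  have hr0 : 0 < r := lt_of_lt_of_le hr₀ hr
  have h1 : (-(p+1) : ℝ) < -1 := by linarith
  set G : ℝ → ℝ := fun s => p * s ^ (-(p+1)) * (f s - f r) with hG
  have hGm : Measurable G := by
    have hfm : Measurable (f : ℝ → ℝ) := f.mono.measurable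
    fun_prop
  have hGnn : ∀ s ∈ Ioi r, 0 ≤ G s := fun s hs =>
    mul_nonneg (mul_nonneg hp.le (rpow_nonneg (hr0.trans hs).le _))
      (sub_nonneg.2 (f.mono (le_of_lt hs)))
  have hA_lt : (∫⁻ t in Ioi r, ENNReal.ofReal (t ^ (-p)) ∂μ) < ⊤ := by
    calc ∫⁻ t in Ioi r, ENNReal.ofReal (t ^ (-p)) ∂μ
        ≤ ∫⁻ t in Ioi r₀, ENNReal.ofReal (t ^ (-p)) ∂μ :=
          lintegral_mono_set (Ioi_subset_Ioi hr)
      _ ≤ ∫⁻ t in Ioi r₀, (‖t ^ (-p)‖₊ : ENNReal) ∂μ := by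
          refine lintegral_mono fun t => ?_
          rw [← enorm_eq_nnnorm, Real.enorm_eq_ofReal_abs]
          exact ENNReal.ofReal_le_ofReal (le_abs_self _)
      _ < ⊤ := hint.2
  have hB_lt : (∫⁻ s in Ioi r, ENNReal.ofReal (G s)) < ⊤ := by
    rw [← stieltjes_tonelli f hp hr0]; exact hA_lt
  have hGint : IntegrableOn G (Ioi r) volume := by
    refine ⟨hGm.aestronglyMeasurable, ?_⟩
    rw [hasFiniteIntegral_iff_ofReal ?nn]
    case nn => filter_upwards [ae_restrict_mem measurableSet_Ioi] with s hs; exact hGnn s hs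
    exact hB_lt
  refine ⟨hGint, ?_⟩
  have e1 : (∫ t in Ioi r, t ^ (-p) ∂μ)
      = (∫⁻ t in Ioi r, ENNReal.ofReal (t ^ (-p)) ∂μ).toReal := by
    rw [integral_eq_lintegral_of_nonneg_ae]
    · filter_upwards [ae_restrict_mem measurableSet_Ioi] with t ht
      exact rpow_nonneg (hr0.trans ht).le _
    · exact ((by fun_prop : Measurable fun t : ℝ => t ^ (-p))).aestronglyMeasurable
  have e2 : (∫ s in Ioi r, G s)
      = (∫⁻ s in Ioi r, ENNReal.ofReal (G s)).toReal := by
    rw [integral_eq_lintegral_of_nonneg_ae]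
    · filter_upwards [ae_restrict_mem measurableSet_Ioi] with s hs
      exact hGnn s hs
    · exact hGm.aestronglyMeasurable
  rw [e1, e2, stieltjes_tonelli f hp hr0]

private lemma part_c (r₀ : ℝ) (hr₀ : 0 < r₀) (f : StieltjesFunction ℝ) (p : ℝ) (hp : 0 < p)
    (hint : IntegrableOn (fun t : ℝ => t ^ (-p)) (Ioi r₀) f.measure)
    (r : ℝ) (hr : r₀ ≤ r) :
    (∫ t in Ioi r, t ^ (-p) ∂f.measure)
      = -(f r / r ^ p) + p * ∫ t in Ioi r, f t / t ^ (p + 1) := by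
  obtain ⟨hGint, hkey⟩ := main_key r₀ hr₀ f p hp hint r hr
  have hr0 : 0 < r := hr₀.trans_le hr
  have h1 : (-(p+1):ℝ) < -1 := by linarith
  have hrp : r ^ p ≠ 0 := (rpow_pos_of_pos hr0 p).ne'
  have hrint : IntegrableOn (fun s : ℝ => s ^ (-(p+1))) (Ioi r) :=
    integrableOn_Ioi_rpow_of_lt h1 hr0
  have hcint : IntegrableOn (fun s : ℝ => p * s ^ (-(p+1)) * f r) (Ioi r) :=
    (hrint.const_mul p).mul_const _
  have h1int : IntegrableOn (fun s : ℝ => p * s ^ (-(p+1)) * f s) (Ioi r) := by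
    have heq : (fun s : ℝ => p * s ^ (-(p+1)) * f s)
        = fun s => (p * s ^ (-(p+1)) * (f s - f r)) + p * s ^ (-(p+1)) * f r := by
      funext s; ring
    rw [heq]; exact hGint.add hcint
  have hsplit : (∫ s in Ioi r, p * s ^ (-(p+1)) * (f s - f r))
      = (∫ s in Ioi r, p * s ^ (-(p+1)) * f s) - ∫ s in Ioi r, p * s ^ (-(p+1)) * f r := by
    rw [← integral_sub h1int hcint]; congr 1; funext s; ring
  have hc : (∫ s in Ioi r, p * s ^ (-(p+1)) * f r) = f r / r ^ p := by
    have heq : (fun s : ℝ => p * s ^ (-(p+1)) * f r) = fun s => (p * f r) * s ^ (-(p+1)) := by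
      funext s; ring
    rw [heq, MeasureTheory.integral_const_mul, integral_Ioi_rpow_of_lt h1 hr0]
    have h2 : (-(p+1):ℝ) + 1 = -p := by ring
    rw [h2, rpow_neg hr0.le]
    field_simp
  have hmain : (∫ t in Ioi r, f t / t ^ (p+1)) = ∫ s in Ioi r, s ^ (-(p+1)) * f s := by
    refine setIntegral_congr_fun measurableSet_Ioi fun t ht => ?_
    rw [rpow_neg (hr0.trans ht).le]
    exact div_eq_inv_mul _ _
  have hpull : (∫ s in Ioi r, p * s ^ (-(p+1)) * f s)
      = p * ∫ s in Ioi r, s ^ (-(p+1)) * f s := by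
    rw [← MeasureTheory.integral_const_mul]; congr 1; funext s; ring
  rw [hkey, hsplit, hc, hmain, hpull]
  ring

lemma part_b (r₀ : ℝ) (hr₀ : 0 < r₀) (f : StieltjesFunction ℝ) (p : ℝ) (hp : 0 < p)
    (hint : IntegrableOn (fun t : ℝ => t ^ (-p)) (Ioi r₀) f.measure) :
    IntegrableOn (fun t : ℝ => |f t| / t ^ (p + 1)) (Ioi r₀) volume := by
  obtain ⟨hGint, -⟩ := main_key r₀ hr₀ f p hp hint r₀ le_rfl
  have h1 : (-(p+1):ℝ) < -1 := by linarith
  have habs : IntegrableOn (fun s : ℝ => |f r₀| * s ^ (-(p+1))) (Ioi r₀) :=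
    (integrableOn_Ioi_rpow_of_lt h1 hr₀).const_mul _
  have hbound : IntegrableOn
      (fun s : ℝ => p⁻¹ * (p * s ^ (-(p+1)) * (f s - f r₀)) + |f r₀| * s ^ (-(p+1)))
      (Ioi r₀) volume := (hGint.const_mul _).add habs
  refine Integrable.mono' hbound ?_ ?_
  · have hfm : Measurable (f : ℝ → ℝ) := f.mono.measurable
    exact Measurable.aestronglyMeasurable (by fun_prop)
  · filter_upwards [ae_restrict_mem measurableSet_Ioi] with t ht
    have ht0 : 0 < t := hr₀.trans ht
    have htp : 0 < t ^ (p+1) := rpow_pos_of_pos ht0 _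
    rw [Real.norm_eq_abs, abs_of_nonneg (div_nonneg (abs_nonneg _) htp.le)]
    have hfb : |f t| ≤ (f t - f r₀) + |f r₀| := by
      have h3 := abs_add_le (f r₀) (f t - f r₀)
      have h4 : f r₀ + (f t - f r₀) = f t := by ring
      rw [h4, abs_of_nonneg (sub_nonneg.2 (f.mono (le_of_lt ht)))] at h3
      linarith
    calc |f t| / t ^ (p+1) ≤ ((f t - f r₀) + |f r₀|) / t ^ (p+1) := by gcongr
      _ = p⁻¹ * (p * t ^ (-(p+1)) * (f t - f r₀)) + |f r₀| * t ^ (-(p+1)) := by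
          rw [rpow_neg ht0.le]
          field_simp

private lemma part_a (r₀ : ℝ) (hr₀ : 0 < r₀) (f : StieltjesFunction ℝ) (p : ℝ) (hp : 0 < p)
    (hint : IntegrableOn (fun t : ℝ => t ^ (-p)) (Ioi r₀) f.measure) :
    limsup (fun r : ℝ => max (f r) 0 / r ^ p) atTop = 0 := by
  set μ := f.measure
  set h : ℝ → ℝ := fun b => max (f b) 0 / b ^ p with hh
  set ε : ℝ → ℝ := fun r => ∫ t in Ioi r, t ^ (-p) ∂μ with hε
  have hIr : ∀ r, r₀ ≤ r → IntegrableOn (fun t : ℝ => t ^ (-p)) (Ioi r) μ :=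
    fun r hr => hint.mono_set (Ioi_subset_Ioi hr)
  have hε0 : ∀ r, r₀ ≤ r → 0 ≤ ε r := fun r hr =>
    setIntegral_nonneg measurableSet_Ioi fun t ht =>
      rpow_nonneg ((hr₀.trans_le hr).trans ht).le _
  have claim : ∀ r, r₀ ≤ r → ∀ b, r ≤ b → f b ≤ f r + ε r * b ^ p := by
    intro r hr b hb
    have hr0 : 0 < r := hr₀.trans_le hr
    have hb0 : 0 < b := hr0.trans_le hb
    have hbp : 0 < b ^ p := rpow_pos_of_pos hb0 p
    have hμ : μ (Ioc r b) = ENNReal.ofReal (f b - f r) := f.measure_Ioc r b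
    have hIoc : IntegrableOn (fun t : ℝ => t ^ (-p)) (Ioc r b) μ :=
      (hIr r hr).mono_set Ioc_subset_Ioi_self
    have hfin : μ (Ioc r b) < ⊤ := by rw [hμ]; exact ENNReal.ofReal_lt_top
    have hconst : IntegrableOn (fun _ : ℝ => (b:ℝ) ^ (-p)) (Ioc r b) μ :=
      integrableOn_const hfin.ne
    have hmono : (∫ _ in Ioc r b, (b:ℝ) ^ (-p) ∂μ) ≤ ∫ t in Ioc r b, t ^ (-p) ∂μ := by
      refine setIntegral_mono_on hconst hIoc measurableSet_Ioc fun t ht => ?_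
      exact rpow_le_rpow_of_nonpos (hr0.trans ht.1) ht.2 (neg_nonpos.2 hp.le)
    rw [setIntegral_const] at hmono
    have hsub : (∫ t in Ioc r b, t ^ (-p) ∂μ) ≤ ε r := by
      refine setIntegral_mono_set (hIr r hr) ?_ (HasSubset.Subset.eventuallyLE Ioc_subset_Ioi_self)
      filter_upwards [ae_restrict_mem measurableSet_Ioi] with t ht
      exact rpow_nonneg (hr0.trans ht).le _
    have htr : (μ (Ioc r b)).toReal = f b - f r := by
      rw [hμ, ENNReal.toReal_ofReal (sub_nonneg.2 (f.mono hb))]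
    rw [measureReal_def, htr, smul_eq_mul] at hmono
    have hkey : (f b - f r) * b ^ (-p) ≤ ε r := hmono.trans hsub
    rw [rpow_neg hb0.le, ← div_eq_mul_inv, div_le_iff₀ hbp] at hkey
    linarith
  have hub : ∀ r, r₀ ≤ r → ∀ b, r ≤ b → h b ≤ max (f r) 0 / b ^ p + ε r := by
    intro r hr b hb
    have hb0 : 0 < b := (hr₀.trans_le hr).trans_le hb
    have hbp : 0 < b ^ p := rpow_pos_of_pos hb0 p
    have h1 : max (f b) 0 ≤ max (f r) 0 + ε r * b ^ p := by
      refine max_le ?_ ?_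
      · calc f b ≤ f r + ε r * b ^ p := claim r hr b hb
          _ ≤ max (f r) 0 + ε r * b ^ p := by gcongr; exact le_max_left _ _
      · exact add_nonneg (le_max_right _ _) (mul_nonneg (hε0 r hr) hbp.le)
    calc h b = max (f b) 0 / b ^ p := rfl
      _ ≤ (max (f r) 0 + ε r * b ^ p) / b ^ p := by gcongr
      _ = max (f r) 0 / b ^ p + ε r := by field_simp
  have hnn : ∀ᶠ b : ℝ in atTop, 0 ≤ h b := by
    filter_upwards [eventually_gt_atTop 0] with b hb
    exact div_nonneg (le_max_right _ _) (rpow_pos_of_pos hb p).le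
  have hcb : IsCoboundedUnder (· ≤ ·) atTop h :=
    isCoboundedUnder_le_of_eventually_le atTop hnn
  have hlimsup_le : ∀ r, r₀ ≤ r → limsup h atTop ≤ ε r := by
    intro r hr
    have htend : Tendsto (fun b : ℝ => max (f r) 0 / b ^ p + ε r) atTop (𝓝 (0 + ε r)) :=
      (Tendsto.div_atTop tendsto_const_nhds (tendsto_rpow_atTop hp)).add_const _
    rw [zero_add] at htend
    have hle : h ≤ᶠ[atTop] fun b : ℝ => max (f r) 0 / b ^ p + ε r := by
      filter_upwards [eventually_ge_atTop r] with b hb using hub r hr b hb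
    calc limsup h atTop ≤ limsup (fun b : ℝ => max (f r) 0 / b ^ p + ε r) atTop :=
          limsup_le_limsup hle hcb htend.isBoundedUnder_le
      _ = ε r := htend.limsup_eq
  have hseq : Tendsto (fun n : ℕ => ε (r₀ + n)) atTop (𝓝 0) := by
    have hmono : Monotone (fun n : ℕ => Ioc r₀ (r₀ + (n:ℝ))) := fun m n hmn =>
      Ioc_subset_Ioc le_rfl (by exact add_le_add_right (Nat.cast_le.2 hmn) r₀)
    have hunion : (⋃ n : ℕ, Ioc r₀ (r₀ + (n:ℝ))) = Ioi r₀ := by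
      ext x
      simp only [mem_iUnion, mem_Ioc, mem_Ioi]
      constructor
      · rintro ⟨n, h1, _⟩; exact h1
      · intro hx
        obtain ⟨n, hn⟩ := exists_nat_ge (x - r₀)
        exact ⟨n, hx, by linarith⟩
    have htends := tendsto_setIntegral_of_monotone (fun n : ℕ => measurableSet_Ioc) hmono
      (by rw [hunion]; exact hint)
    rw [hunion] at htends
    have hdecomp : ∀ n : ℕ, ε (r₀ + (n:ℝ)) = ε r₀ - ∫ t in Ioc r₀ (r₀+(n:ℝ)), t ^ (-p) ∂μ := by
      intro n
      have hle : r₀ ≤ r₀ + (n:ℝ) := le_add_of_nonneg_right n.cast_nonneg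
      have hsplit : (Ioc r₀ (r₀+(n:ℝ))) ∪ Ioi (r₀+(n:ℝ)) = Ioi r₀ := Ioc_union_Ioi_eq_Ioi hle
      have hu := setIntegral_union (Ioc_disjoint_Ioi le_rfl) measurableSet_Ioi
        (hint.mono_set Ioc_subset_Ioi_self) (hIr _ hle) (f := fun t : ℝ => t ^ (-p))
      rw [hsplit] at hu
      simp only [hε]
      linarith [hu]
    have : (fun n : ℕ => ε (r₀ + (n:ℝ)))
        = fun n : ℕ => ε r₀ - ∫ t in Ioc r₀ (r₀+(n:ℝ)), t ^ (-p) ∂μ := funext hdecomp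
    rw [this]
    have := tendsto_const_nhds (x := ε r₀) (f := atTop (α := ℕ)) |>.sub htends
    simpa [hε] using this
  refine le_antisymm ?_ ?_
  · have hδ : ∀ δ : ℝ, 0 < δ → limsup h atTop ≤ δ := by
      intro δ hδ
      obtain ⟨n, hn⟩ := (hseq.eventually (eventually_lt_nhds hδ)).exists
      exact (hlimsup_le _ (le_add_of_nonneg_right n.cast_nonneg)).trans hn.le
    have := le_of_forall_pos_le_add fun δ hd => (hδ δ hd).trans (by linarith : δ ≤ 0 + δ)
    exact this
  · have htend : Tendsto (fun b : ℝ => max (f r₀) 0 / b ^ p + ε r₀) atTop (𝓝 (0 + ε r₀)) :=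
        (Tendsto.div_atTop tendsto_const_nhds (tendsto_rpow_atTop hp)).add_const _
    have hbd : IsBoundedUnder (· ≤ ·) atTop h := by
      refine htend.isBoundedUnder_le.mono_le ?_
      filter_upwards [eventually_ge_atTop r₀] with b hb using hub r₀ le_rfl b hb
    exact le_limsup_of_frequently_le hnn.frequently hbd

private lemma part2 (r₀ : ℝ) (hr₀ : 0 < r₀) (f : StieltjesFunction ℝ)
    (hfin : f.measure (Ioi r₀) < ⊤) : ∃ L : ℝ, Tendsto (fun r : ℝ => f r) atTop (nhds L) := by
  have hbdd : BddAbove (range (f : ℝ → ℝ)) := by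
    refine ⟨f r₀ + (f.measure (Ioi r₀)).toReal, ?_⟩
    rintro x ⟨y, rfl⟩
    rcases le_total y r₀ with hy | hy
    · exact (f.mono hy).trans (le_add_of_nonneg_right ENNReal.toReal_nonneg)
    · have h1 : f.measure (Ioc r₀ y) = ENNReal.ofReal (f y - f r₀) := f.measure_Ioc _ _
      have h3 : (f.measure (Ioc r₀ y)).toReal ≤ (f.measure (Ioi r₀)).toReal :=
        ENNReal.toReal_mono hfin.ne (measure_mono Ioc_subset_Ioi_self)
      rw [h1, ENNReal.toReal_ofReal (sub_nonneg.2 (f.mono hy))] at h3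
      linarith
  exact ⟨_, tendsto_atTop_ciSup f.mono hbdd⟩

/-- Proposition 1 (iii). -/
theorem convergence_class_at_infty_of_stieltjes_integral
    (r₀ : ℝ) (hr₀ : 0 < r₀) (f : StieltjesFunction ℝ) :
    (∀ p : ℝ, 0 < p →
      IntegrableOn (fun t : ℝ => t ^ (-p)) (Ioi r₀) f.measure →
      (limsup (fun r : ℝ => max (f r) 0 / r ^ p) atTop = 0 ∧
       IntegrableOn (fun t : ℝ => |f t| / t ^ (p + 1)) (Ioi r₀) volume ∧
       ∀ r : ℝ, r₀ ≤ r →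
         (∫ t in Ioi r, t ^ (-p) ∂f.measure)
           = -(f r / r ^ p) + p * ∫ t in Ioi r, f t / t ^ (p + 1))) ∧
    (f.measure (Ioi r₀) < ⊤ → ∃ L : ℝ, Tendsto (fun r : ℝ => f r) atTop (nhds L)) := by
  refine ⟨fun p hp hint => ⟨part_a r₀ hr₀ f p hp hint, part_b r₀ hr₀ f p hp hint,
    fun r hr => part_c r₀ hr₀ f p hp hint r hr⟩, part2 r₀ hr₀ f⟩
end

section
/- Let p ≥ 0, r₀ > 0 and let f : (0, r₀] → ℝ be increasing and right-continuous, with Lebesgue–Stieltjes measure df. If the integral ∫_{0}^{r₀} |f(t)|/t^{p+1} dt is finite, then: (1) lim_{r→0⁺} f(r)·log r = 0 (in particular f(r) → 0 as r → 0⁺); (2) the Stieltjes integral ∫_{(0,r₀)} log t · df(t) is finite (> −∞); and (3) if moreover p > 0, then limsup_{r→0⁺} |f(r)|/r^p = 0 and the Stieltjes integral ∫_{(0,r₀)} t^{−p} df(t) is finite. -/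
open MeasureTheory Filter Set
open ENNReal Topology


lemma aux_integral_inv_Ioo {t a : ℝ} (ht : 0 < t) (hta : t ≤ a) :
    ∫ u in Ioo t a, u⁻¹ = Real.log a - Real.log t := by
  have h0 : (0:ℝ) ∉ Set.uIcc t a := by
    rw [Set.uIcc_of_le hta]
    intro h
    exact absurd h.1 (not_le.2 ht)
  rw [← integral_Ioc_eq_integral_Ioo, ← intervalIntegral.integral_of_le hta,
    integral_inv h0, Real.log_div (ne_of_gt (ht.trans_le hta)) (ne_of_gt ht)]

lemma aux_lintegral_inv_Ioo {t a : ℝ} (ht : 0 < t) (hta : t ≤ a) :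
    ∫⁻ u in Ioo t a, ENNReal.ofReal u⁻¹ = ENNReal.ofReal (Real.log a - Real.log t) := by
  have hint : IntegrableOn (fun u : ℝ => u⁻¹) (Ioo t a) volume := by
    apply (ContinuousOn.integrableOn_compact isCompact_Icc ?_).mono_set Ioo_subset_Icc_self
    exact continuousOn_inv₀.mono (fun x hx => ne_of_gt (lt_of_lt_of_le ht hx.1))
  rw [← ofReal_integral_eq_lintegral_ofReal hint ?nn, aux_integral_inv_Ioo ht hta]
  case nn =>
    filter_upwards [ae_restrict_mem measurableSet_Ioo] with u hu
    exact inv_nonneg.2 (le_of_lt (ht.trans hu.1))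

lemma aux_integral_rpow_Ioo {p t a : ℝ} (hp : 0 < p) (ht : 0 < t) (hta : t ≤ a) :
    ∫ u in Ioo t a, p * u ^ (-(p+1)) = t ^ (-p) - a ^ (-p) := by
  have h0 : (0:ℝ) ∉ Set.uIcc t a := by
    rw [Set.uIcc_of_le hta]
    intro h
    exact absurd h.1 (not_le.2 ht)
  rw [← integral_Ioc_eq_integral_Ioo, ← intervalIntegral.integral_of_le hta]
  rw [intervalIntegral.integral_const_mul]
  rw [integral_rpow (Or.inr ⟨by intro h; nlinarith, h0⟩)]
  have hne : -(p+1) + 1 = -p := by ring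
  rw [hne, div_neg, mul_neg, mul_div_assoc', mul_div_cancel_left₀ _ (ne_of_gt hp), neg_sub]

lemma aux_lintegral_rpow_Ioo {p t a : ℝ} (hp : 0 < p) (ht : 0 < t) (hta : t ≤ a) :
    ∫⁻ u in Ioo t a, ENNReal.ofReal (p * u ^ (-(p+1))) = ENNReal.ofReal (t ^ (-p) - a ^ (-p)) := by
  have hint : IntegrableOn (fun u : ℝ => p * u ^ (-(p+1))) (Ioo t a) volume := by
    apply (ContinuousOn.integrableOn_compact isCompact_Icc ?_).mono_set Ioo_subset_Icc_self
    exact continuousOn_const.mul <| ContinuousOn.rpow_const continuousOn_id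
      (fun x hx => Or.inl (ne_of_gt (lt_of_lt_of_le ht hx.1)))
  rw [← ofReal_integral_eq_lintegral_ofReal hint ?nn, aux_integral_rpow_Ioo hp ht hta]
  case nn =>
    filter_upwards [ae_restrict_mem measurableSet_Ioo] with u hu
    exact mul_nonneg hp.le (Real.rpow_nonneg (le_of_lt (ht.trans hu.1)) _)

lemma aux_swap (μ : Measure ℝ) [SigmaFinite μ] {a : ℝ} (ha : 0 < a)
    (w : ℝ → ℝ≥0∞) (hw : Measurable w) :
    ∫⁻ t in Ioo 0 a, (∫⁻ u in Ioo t a, w u) ∂μ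
      = ∫⁻ u in Ioo 0 a, w u * μ (Ioo 0 u) := by
  set F : ℝ → ℝ → ℝ≥0∞ := fun t u => if t < u ∧ u < a then w u else 0 with hF
  have hS : MeasurableSet {q : ℝ × ℝ | q.1 < q.2 ∧ q.2 < a} :=
    (measurableSet_lt measurable_fst measurable_snd).inter
      (measurable_snd measurableSet_Iio)
  have hFm : AEMeasurable (Function.uncurry F) ((μ.restrict (Ioo 0 a)).prod volume) := by
    have : Function.uncurry F =
        fun q : ℝ × ℝ => Set.indicator {q : ℝ × ℝ | q.1 < q.2 ∧ q.2 < a} (fun q => w q.2) q := by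
      funext q
      simp only [Function.uncurry, hF, Set.indicator_apply, Set.mem_setOf_eq]
    rw [this]
    exact ((hw.comp measurable_snd).indicator hS).aemeasurable
  have step1 : ∀ t : ℝ, ∫⁻ u, F t u = ∫⁻ u in Ioo t a, w u := by
    intro t
    rw [← lintegral_indicator measurableSet_Ioo]
    congr 1
    funext u
    simp only [hF, Set.indicator_apply, mem_Ioo]
  have step2 : ∀ u : ℝ, (∫⁻ t, F t u ∂(μ.restrict (Ioo 0 a)))
      = (Ioo 0 a).indicator (fun u => w u * μ (Ioo 0 u)) u := by
    intro u
    by_cases hua : u < a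
    · have hfun : (fun t => F t u) = (Iio u).indicator (fun _ => w u) := by
        funext t
        simp only [hF, Set.indicator_apply, mem_Iio, hua, and_true]
      rw [hfun, lintegral_indicator measurableSet_Iio, setLIntegral_const,
        Measure.restrict_apply measurableSet_Iio]
      by_cases hu0 : 0 < u
      · have hset : Iio u ∩ Ioo 0 a = Ioo 0 u := by
          ext x
          simp only [mem_inter_iff, mem_Iio, mem_Ioo]
          constructor
          · rintro ⟨h1, h2, _⟩; exact ⟨h2, h1⟩
          · rintro ⟨h1, h2⟩; exact ⟨h2, h1, h2.trans hua⟩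
        rw [hset, Set.indicator_of_mem (by exact ⟨hu0, hua⟩)]
      · have hset : Iio u ∩ Ioo 0 a = ∅ := by
          ext x
          simp only [mem_inter_iff, mem_Iio, mem_Ioo, mem_empty_iff_false, iff_false, not_and]
          intro h1 h2
          exact absurd (h2.trans h1) hu0
        rw [hset, measure_empty, mul_zero,
          Set.indicator_of_notMem (by simp [mem_Ioo, hu0])]
    · have hfun : (fun t => F t u) = fun _ => (0 : ℝ≥0∞) := by
        funext t
        simp only [hF, hua, and_false, if_false]
      rw [hfun, lintegral_zero, Set.indicator_of_notMem (by simp [mem_Ioo, hua])]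
  calc ∫⁻ t in Ioo 0 a, (∫⁻ u in Ioo t a, w u) ∂μ
      = ∫⁻ t in Ioo 0 a, (∫⁻ u, F t u) ∂μ := by
        congr 1; funext t; rw [step1]
    _ = ∫⁻ u, ∫⁻ t in Ioo 0 a, F t u ∂μ := lintegral_lintegral_swap hFm
    _ = ∫⁻ u, (Ioo 0 a).indicator (fun u => w u * μ (Ioo 0 u)) u := by
        congr 1; funext u; rw [step2]
    _ = ∫⁻ u in Ioo 0 a, w u * μ (Ioo 0 u) := lintegral_indicator measurableSet_Ioo _

lemma aux_not_integrable {p r₀ b c : ℝ} (hp : 0 ≤ p) (hr₀ : 0 < r₀) (hb : 0 < b)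
    (hbr : b ≤ r₀) (hc : 0 < c) (F : ℝ → ℝ)
    (hint : IntegrableOn (fun t : ℝ => |F t| / t ^ (p + 1)) (Ioo 0 r₀) volume)
    (hF : ∀ u ∈ Ioo (0:ℝ) b, c ≤ |F u|) : False := by
  have hr₀p : (0:ℝ) < r₀ ^ p := Real.rpow_pos_of_pos hr₀ p
  have hmono : IntegrableOn (fun u : ℝ => u ^ (-1 : ℝ)) (Ioo 0 b) volume := by
    apply Integrable.mono'
      (g := fun u : ℝ => (r₀ ^ p / c) * (|F u| / u ^ (p + 1)))
      ((hint.mono_set (Ioo_subset_Ioo_right hbr)).const_mul _)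
      (by
        have : (fun u : ℝ => u ^ (-1:ℝ)) = fun u : ℝ => u⁻¹ :=
          funext fun u => Real.rpow_neg_one u
        rw [this]
        exact measurable_inv.aestronglyMeasurable)
    filter_upwards [ae_restrict_mem measurableSet_Ioo] with u hu
    have hu0 : 0 < u := hu.1
    have hup : 0 < u ^ (p + 1) := Real.rpow_pos_of_pos hu0 _
    have h1 : u ^ (p + 1) ≤ u * r₀ ^ p := by
      rw [Real.rpow_add_one (ne_of_gt hu0)]
      calc u ^ p * u ≤ r₀ ^ p * u :=
            mul_le_mul_of_nonneg_right
              (Real.rpow_le_rpow hu0.le (le_of_lt (hu.2.trans_le hbr)) hp) hu0.le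
        _ = u * r₀ ^ p := mul_comm _ _
    have hnorm : ‖u ^ (-1 : ℝ)‖ = u⁻¹ := by
      rw [Real.rpow_neg_one, Real.norm_eq_abs, abs_of_nonneg (inv_nonneg.2 hu0.le)]
    rw [hnorm]
    calc u⁻¹ ≤ r₀ ^ p / u ^ (p + 1) := by
          rw [le_div_iff₀ hup]
          calc u⁻¹ * u ^ (p+1) ≤ u⁻¹ * (u * r₀ ^ p) := by
                exact mul_le_mul_of_nonneg_left h1 (inv_nonneg.2 hu0.le)
            _ = r₀ ^ p := by field_simp
      _ ≤ (r₀ ^ p / c) * (|F u| / u ^ (p + 1)) := by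
          rw [div_mul_div_comm, div_le_div_iff₀ hup (by positivity)]
          calc r₀ ^ p * (c * u ^ (p+1)) = c * (r₀ ^ p * u ^ (p+1)) := by ring
            _ ≤ |F u| * (r₀ ^ p * u ^ (p+1)) :=
                mul_le_mul_of_nonneg_right (hF u hu) (by positivity)
            _ = r₀ ^ p * |F u| * u ^ (p+1) := by ring
  rw [intervalIntegral.integrableOn_Ioo_rpow_iff hb] at hmono
  linarith
/-- Proposition 2 (i)-(ii), for an increasing right-continuous function `f` (a Stieltjes
function) near `0`: if `∫_0^{r₀} |f(t)|/t^{p+1} dt < ∞` (convergence class at order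
`p ≥ 0` near `0`), then `f(r)·log r → 0` as `r → 0⁺` (in particular `f(r) → 0`),
the Stieltjes integral `∫_{(0,r₀)} log t · df(t)` is finite, and if moreover `p > 0`
then the type of vanishing `limsup_{r→0⁺} |f(r)|/r^p` is `0` and the Stieltjes integral
`∫_{(0,r₀)} t^{-p} df(t)` is finite. -/
theorem convergence_class_at_zero_of_integral
    (p r₀ : ℝ) (hp : 0 ≤ p) (hr₀ : 0 < r₀) (f : StieltjesFunction ℝ)
    (hint : IntegrableOn (fun t : ℝ => |f t| / t ^ (p + 1)) (Ioo 0 r₀) volume) :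
    (Tendsto (fun r : ℝ => f r * Real.log r) (nhdsWithin 0 (Ioi 0)) (nhds 0) ∧
      Tendsto (fun r : ℝ => f r) (nhdsWithin 0 (Ioi 0)) (nhds 0)) ∧
    IntegrableOn (fun t : ℝ => Real.log t) (Ioo 0 r₀) f.measure ∧
    (0 < p →
      limsup (fun r : ℝ => |f r| / r ^ p) (nhdsWithin 0 (Ioi 0)) = 0 ∧
      IntegrableOn (fun t : ℝ => t ^ (-p)) (Ioo 0 r₀) f.measure) := by
  have hfm : Measurable f := f.mono.measurable
  -- nonnegativity of f on (0, r₀]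
  have hf_nonneg : ∀ t ∈ Ioc (0:ℝ) r₀, 0 ≤ f t := by
    by_contra hcon
    push_neg at hcon
    obtain ⟨t₀, ht₀, hft₀⟩ := hcon
    refine aux_not_integrable hp hr₀ ht₀.1 ht₀.2 (neg_pos.2 hft₀) f hint ?_
    intro u hu
    have : f u ≤ f t₀ := f.mono hu.2.le
    rw [abs_of_nonpos (this.trans hft₀.le)]
    linarith
  -- limit of f at 0⁺ is 0
  have htendL : Tendsto f (𝓝[>] (0:ℝ)) (𝓝 (sInf (f '' Ioi 0))) :=
    Monotone.tendsto_nhdsGT f.mono 0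
  have hLge : ∀ x ∈ Ioi (0:ℝ), (0:ℝ) ≤ f x := by
    intro x hx
    rcases le_or_gt x r₀ with h | h
    · exact hf_nonneg x ⟨hx, h⟩
    · exact (hf_nonneg r₀ ⟨hr₀, le_rfl⟩).trans (f.mono h.le)
  have hL0 : (0:ℝ) ≤ sInf (f '' Ioi 0) := by
    apply le_csInf (nonempty_Ioi.image f)
    rintro b ⟨x, hx, rfl⟩
    exact hLge x hx
  have hbdd : BddBelow (f '' Ioi 0) := ⟨0, by rintro _ ⟨x, hx, rfl⟩; exact hLge x hx⟩
  have hLeq : sInf (f '' Ioi 0) = 0 := by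
    by_contra hne
    have hLpos : 0 < sInf (f '' Ioi 0) := lt_of_le_of_ne hL0 (Ne.symm hne)
    refine aux_not_integrable hp hr₀ hr₀ le_rfl hLpos f hint ?_
    intro u hu
    rw [abs_of_nonneg (hf_nonneg u ⟨hu.1, hu.2.le⟩)]
    exact csInf_le hbdd ⟨u, hu.1, rfl⟩
  have htend0 : Tendsto f (𝓝[>] (0:ℝ)) (𝓝 0) := by
    have h := htendL
    rw [hLeq] at h
    exact h
  -- f 0 = 0
  have hf0 : f 0 = 0 := by
    have h0' : Tendsto f (𝓝[>] (0:ℝ)) (𝓝 (f 0)) :=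
      (f.right_continuous 0).tendsto.mono_left (nhdsWithin_mono 0 Ioi_subset_Ici_self)
    exact tendsto_nhds_unique h0' htend0
  -- the function g and its properties
  set g : ℝ → ℝ := fun u => f u / u ^ (p + 1) with hgdef
  have hg_int : IntegrableOn g (Ioo 0 r₀) volume := by
    apply hint.congr_fun ?_ measurableSet_Ioo
    intro u hu
    show |f u| / u ^ (p+1) = f u / u ^ (p+1)
    rw [abs_of_nonneg (hf_nonneg u ⟨hu.1, hu.2.le⟩)]
  have hg_nn : ∀ u ∈ Ioo (0:ℝ) r₀, 0 ≤ g u := by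
    intro u hu
    exact div_nonneg (hf_nonneg u ⟨hu.1, hu.2.le⟩) (Real.rpow_nonneg hu.1.le _)
  have hcomp : ∀ u ∈ Ioo (0:ℝ) r₀, f u * u⁻¹ ≤ r₀ ^ p * g u := by
    intro u hu
    have hu0 : 0 < u := hu.1
    have hup : 0 < u ^ (p + 1) := Real.rpow_pos_of_pos hu0 _
    have h1 : u ^ (p + 1) ≤ u * r₀ ^ p := by
      rw [Real.rpow_add_one (ne_of_gt hu0)]
      calc u ^ p * u ≤ r₀ ^ p * u :=
            mul_le_mul_of_nonneg_right (Real.rpow_le_rpow hu0.le hu.2.le hp) hu0.le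
        _ = u * r₀ ^ p := mul_comm _ _
    have hfu : 0 ≤ f u := hf_nonneg u ⟨hu.1, hu.2.le⟩
    rw [hgdef]
    simp only []
    rw [mul_div_assoc']
    rw [mul_comm (f u) u⁻¹, ← div_eq_inv_mul]
    rw [div_le_div_iff₀ hu0 hup]
    calc f u * u ^ (p+1) ≤ f u * (u * r₀ ^ p) := mul_le_mul_of_nonneg_left h1 hfu
      _ = r₀ ^ p * f u * u := by ring
  have hq : IntegrableOn (fun u : ℝ => f u * u⁻¹) (Ioo 0 r₀) volume := by
    apply Integrable.mono' ((hg_int.const_mul (r₀ ^ p)))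
      ((hfm.mul measurable_inv).aestronglyMeasurable)
    filter_upwards [ae_restrict_mem measurableSet_Ioo] with u hu
    rw [Real.norm_eq_abs, Pi.mul_apply, abs_of_nonneg (mul_nonneg (hf_nonneg u ⟨hu.1, hu.2.le⟩)
      (inv_nonneg.2 hu.1.le))]
    exact hcomp u hu
  -- the function G and its limit
  set G : ℝ → ℝ := fun s => ∫ u in Ioo 0 s, g u with hGdef
  have hGtend : Tendsto G (𝓝[>] (0:ℝ)) (𝓝 0) := by
    rw [Metric.tendsto_nhdsWithin_nhds]
    intro ε hε
    have hanti : Antitone (fun n : ℕ => Ioo (0:ℝ) (r₀ / (n+1))) := by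
      intro m n hmn
      apply Ioo_subset_Ioo_right
      apply div_le_div_of_nonneg_left hr₀.le (by positivity)
      exact_mod_cast Nat.succ_le_succ hmn
    have hint0 : ∃ n : ℕ, IntegrableOn g (Ioo (0:ℝ) (r₀ / (n+1))) volume :=
      ⟨0, by simpa using hg_int.mono_set (Ioo_subset_Ioo_right (by norm_num))⟩
    have h0 := tendsto_setIntegral_of_antitone (fun n => measurableSet_Ioo) hanti hint0
    have hempty : ⋂ n : ℕ, Ioo (0:ℝ) (r₀/(n+1)) = ∅ := by
      ext x
      simp only [mem_iInter, mem_Ioo, mem_empty_iff_false, iff_false, not_forall]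
      by_cases hx0 : 0 < x
      · obtain ⟨n, hn⟩ := exists_nat_gt (r₀ / x)
        have hlt : r₀ / (n+1) ≤ x := by
          rw [div_le_iff₀ (by positivity)]
          rw [div_lt_iff₀ hx0] at hn
          nlinarith [Nat.cast_nonneg (α := ℝ) n]
        exact ⟨n, fun hc => absurd hc.2 (not_lt.2 hlt)⟩
      · exact ⟨0, fun hc => hx0 hc.1⟩
    rw [hempty] at h0
    simp only [Measure.restrict_empty, integral_zero_measure] at h0
    obtain ⟨N, hN⟩ := (Metric.tendsto_atTop.1 h0 ε hε)
    have hNe := hN N le_rfl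
    have hδpos : (0:ℝ) < r₀ / (N+1) := by positivity
    have hδr : r₀ / (N+1) ≤ r₀ := by
      rw [div_le_iff₀ (by positivity)]
      nlinarith [Nat.cast_nonneg (α := ℝ) N]
    refine ⟨r₀ / (N+1), hδpos, ?_⟩
    intro x hx hdist
    have hx0 : (0:ℝ) < x := hx
    rw [Real.dist_eq, sub_zero, abs_of_pos hx0] at hdist
    have hGmono : G x ≤ G (r₀/(N+1)) := by
      apply setIntegral_mono_set (hg_int.mono_set (Ioo_subset_Ioo_right hδr)) ?_ ?_
      · filter_upwards [ae_restrict_mem measurableSet_Ioo] with u hu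
        exact hg_nn u ⟨hu.1, lt_of_lt_of_le hu.2 hδr⟩
      · exact (Ioo_subset_Ioo_right hdist.le).eventuallyLE
    have hGnn : 0 ≤ G x := by
      apply setIntegral_nonneg measurableSet_Ioo
      intro u hu
      exact hg_nn u ⟨hu.1, lt_of_lt_of_le hu.2 (hdist.le.trans hδr)⟩
    rw [Real.dist_eq, sub_zero, abs_of_nonneg hGnn]
    calc G x ≤ G (r₀/(N+1)) := hGmono
      _ ≤ |G (r₀/(N+1))| := le_abs_self _
      _ < ε := by rwa [Real.dist_eq, sub_zero] at hNe
  -- part (i): f r · log r → 0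
  have hB : Tendsto (fun r : ℝ => f r * (-Real.log r)) (𝓝[>] (0:ℝ)) (𝓝 0) := by
    have hsq : Tendsto Real.sqrt (𝓝[>] (0:ℝ)) (𝓝[>] (0:ℝ)) := by
      rw [tendsto_nhdsWithin_iff]
      constructor
      · exact (Real.continuous_sqrt.tendsto' 0 0 Real.sqrt_zero).mono_left nhdsWithin_le_nhds
      · filter_upwards [self_mem_nhdsWithin] with x hx
        exact Real.sqrt_pos.2 hx
    have hup : Tendsto (fun r : ℝ => 2 * r₀ ^ p * G (Real.sqrt r)) (𝓝[>] (0:ℝ)) (𝓝 0) := by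
      have := (hGtend.comp hsq).const_mul (2 * r₀ ^ p)
      simpa using this
    apply tendsto_of_tendsto_of_tendsto_of_le_of_le' tendsto_const_nhds hup
    · filter_upwards [Ioo_mem_nhdsGT_of_mem
        (show (0:ℝ) ∈ Ico 0 (min 1 r₀) from ⟨le_rfl, lt_min one_pos hr₀⟩)] with r hr
      have h1 : 0 ≤ f r := hf_nonneg r ⟨hr.1, (hr.2.trans_le (min_le_right _ _)).le⟩
      have h2 : Real.log r ≤ 0 :=
        Real.log_nonpos hr.1.le (hr.2.trans_le (min_le_left _ _)).le
      exact mul_nonneg h1 (neg_nonneg.2 h2)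
    · filter_upwards [Ioo_mem_nhdsGT_of_mem
        (show (0:ℝ) ∈ Ico 0 (min 1 (r₀^2)) from ⟨le_rfl, lt_min one_pos (by positivity)⟩)] with r hr
      obtain ⟨hr0, hru⟩ := hr
      have hr1 : r < 1 := hru.trans_le (min_le_left _ _)
      have hrr : r < r₀^2 := hru.trans_le (min_le_right _ _)
      have hsr0 : 0 < Real.sqrt r := Real.sqrt_pos.2 hr0
      have hsrr : Real.sqrt r < r₀ := by
        have h := Real.sqrt_lt_sqrt hr0.le hrr
        rwa [Real.sqrt_sq hr₀.le] at h
      have hrsr : r ≤ Real.sqrt r :=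
        (Real.le_sqrt hr0.le hr0.le).2 (by nlinarith)
      have hsub : Ioo r (Real.sqrt r) ⊆ Ioo 0 r₀ :=
        fun u hu => ⟨hr0.trans hu.1, hu.2.trans hsrr⟩
      have int2 : IntegrableOn (fun u : ℝ => f u * u⁻¹) (Ioo r (Real.sqrt r)) volume :=
        hq.mono_set hsub
      have int1 : IntegrableOn (fun u : ℝ => f r * u⁻¹) (Ioo r (Real.sqrt r)) volume := by
        apply Integrable.const_mul
        apply (ContinuousOn.integrableOn_compact isCompact_Icc ?_).mono_set Ioo_subset_Icc_self
        exact continuousOn_inv₀.mono fun x hx => ne_of_gt (lt_of_lt_of_le hr0 hx.1)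
      have int3 : IntegrableOn (fun u : ℝ => r₀ ^ p * g u) (Ioo r (Real.sqrt r)) volume :=
        (hg_int.mono_set hsub).const_mul _
      calc f r * (-Real.log r)
          = 2 * (f r * (Real.log (Real.sqrt r) - Real.log r)) := by
            rw [Real.log_sqrt hr0.le]; ring
        _ = 2 * ∫ u in Ioo r (Real.sqrt r), f r * u⁻¹ := by
            rw [MeasureTheory.integral_const_mul, aux_integral_inv_Ioo hr0 hrsr]
        _ ≤ 2 * ∫ u in Ioo r (Real.sqrt r), f u * u⁻¹ := by
            apply mul_le_mul_of_nonneg_left ?_ (by norm_num)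
            apply setIntegral_mono_on int1 int2 measurableSet_Ioo
            intro u hu
            exact mul_le_mul_of_nonneg_right (f.mono hu.1.le) (inv_nonneg.2 (hr0.trans hu.1).le)
        _ ≤ 2 * ∫ u in Ioo r (Real.sqrt r), r₀ ^ p * g u := by
            apply mul_le_mul_of_nonneg_left ?_ (by norm_num)
            apply setIntegral_mono_on int2 int3 measurableSet_Ioo
            intro u hu
            exact hcomp u (hsub hu)
        _ = 2 * r₀ ^ p * ∫ u in Ioo r (Real.sqrt r), g u := by
            rw [MeasureTheory.integral_const_mul]; ring
        _ ≤ 2 * r₀ ^ p * G (Real.sqrt r) := by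
            apply mul_le_mul_of_nonneg_left ?_ (by positivity)
            apply setIntegral_mono_set (hg_int.mono_set (Ioo_subset_Ioo_right hsrr.le)) ?_ ?_
            · filter_upwards [ae_restrict_mem measurableSet_Ioo] with u hu
              exact hg_nn u ⟨hu.1, hu.2.trans hsrr⟩
            · exact (Ioo_subset_Ioo_left hr0.le).eventuallyLE
  have hpart1 : Tendsto (fun r : ℝ => f r * Real.log r) (𝓝[>] (0:ℝ)) (𝓝 0) := by
    have heq : (fun r : ℝ => f r * Real.log r) = fun r => -(f r * (-Real.log r)) := by
      funext r; ring
    rw [heq]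
    simpa using hB.neg
  -- measure upper bound and finiteness of the basic lintegral
  have hμub : ∀ u : ℝ, f.measure (Ioo 0 u) ≤ ENNReal.ofReal (f u) := by
    intro u
    rcases le_or_gt u 0 with h | h
    · rw [Ioo_eq_empty (by exact fun hc => absurd (hc.trans_le h) (lt_irrefl _)), measure_empty]
      exact zero_le
    · rw [f.measure_Ioo, hf0, sub_zero]
      exact ENNReal.ofReal_le_ofReal (Monotone.leftLim_le f.mono le_rfl)
  have hI : (∫⁻ u in Ioo 0 r₀, ENNReal.ofReal (g u)) < ⊤ := by
    have h2 := hg_int.2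
    rw [hasFiniteIntegral_iff_norm] at h2
    refine lt_of_le_of_lt (lintegral_mono fun u => ?_) h2
    exact ENNReal.ofReal_le_ofReal ((le_abs_self _).trans_eq (Real.norm_eq_abs _).symm)
  set a := min 1 r₀ with hadef
  have ha0 : 0 < a := lt_min one_pos hr₀
  have ha1 : a ≤ 1 := min_le_left _ _
  have har : a ≤ r₀ := min_le_right _ _
  have hμa : f.measure (Ioo 0 a) < ⊤ := lt_of_le_of_lt (hμub a) ENNReal.ofReal_lt_top
  have hsub_union : Ioo (0:ℝ) r₀ ⊆ Ioo 0 a ∪ Ico a r₀ := by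
    intro x hx
    rcases lt_or_ge x a with h | h
    · exact Or.inl ⟨hx.1, h⟩
    · exact Or.inr ⟨h, hx.2⟩
  -- part (ii)
  have hlog_int : IntegrableOn (fun t : ℝ => Real.log t) (Ioo 0 r₀) f.measure := by
    have h1 : IntegrableOn (fun t : ℝ => Real.log t) (Ico a r₀) f.measure := by
      apply (ContinuousOn.integrableOn_compact isCompact_Icc ?_).mono_set Ico_subset_Icc_self
      apply Real.continuousOn_log.mono
      intro x hx
      exact ne_of_gt (lt_of_lt_of_le ha0 hx.1)
    have h2 : IntegrableOn (fun t : ℝ => Real.log t) (Ioo 0 a) f.measure := by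
      refine ⟨Real.measurable_log.aestronglyMeasurable, ?_⟩
      rw [hasFiniteIntegral_iff_norm]
      calc ∫⁻ t in Ioo 0 a, ENNReal.ofReal ‖Real.log t‖ ∂f.measure
          ≤ ∫⁻ t in Ioo 0 a, (ENNReal.ofReal (Real.log a - Real.log t)
              + ENNReal.ofReal (-Real.log a)) ∂f.measure := by
            apply lintegral_mono_ae
            filter_upwards [ae_restrict_mem measurableSet_Ioo] with t ht
            have hlt : Real.log t ≤ 0 := Real.log_nonpos ht.1.le (ht.2.le.trans ha1)
            rw [Real.norm_eq_abs, abs_of_nonpos hlt,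
              show -Real.log t = (Real.log a - Real.log t) + (-Real.log a) by ring]
            exact ENNReal.ofReal_add_le
        _ = (∫⁻ t in Ioo 0 a, ENNReal.ofReal (Real.log a - Real.log t) ∂f.measure)
              + ENNReal.ofReal (-Real.log a) * f.measure (Ioo 0 a) := by
            rw [lintegral_add_right _ measurable_const, setLIntegral_const]
        _ < ⊤ := by
            refine ENNReal.add_lt_top.2 ⟨?_, ENNReal.mul_lt_top ENNReal.ofReal_lt_top hμa⟩
            have hkey : (∫⁻ t in Ioo 0 a, ENNReal.ofReal (Real.log a - Real.log t) ∂f.measure)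
                = ∫⁻ u in Ioo 0 a, ENNReal.ofReal u⁻¹ * f.measure (Ioo 0 u) := by
              rw [← aux_swap f.measure ha0 (fun u : ℝ => ENNReal.ofReal u⁻¹)
                (ENNReal.measurable_ofReal.comp measurable_inv)]
              apply setLIntegral_congr_fun measurableSet_Ioo
              intro t ht
              exact (aux_lintegral_inv_Ioo ht.1 ht.2.le).symm
            rw [hkey]
            calc ∫⁻ u in Ioo 0 a, ENNReal.ofReal u⁻¹ * f.measure (Ioo 0 u)
                ≤ ∫⁻ u in Ioo 0 a, ENNReal.ofReal (r₀ ^ p) * ENNReal.ofReal (g u) := by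
                  apply lintegral_mono_ae
                  filter_upwards [ae_restrict_mem measurableSet_Ioo] with u hu
                  calc ENNReal.ofReal u⁻¹ * f.measure (Ioo 0 u)
                      ≤ ENNReal.ofReal u⁻¹ * ENNReal.ofReal (f u) :=
                        mul_le_mul_right (hμub u) _
                    _ = ENNReal.ofReal (f u * u⁻¹) := by
                        rw [← ENNReal.ofReal_mul (inv_nonneg.2 hu.1.le), mul_comm]
                    _ ≤ ENNReal.ofReal (r₀ ^ p * g u) :=
                        ENNReal.ofReal_le_ofReal (hcomp u ⟨hu.1, hu.2.trans_le har⟩)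
                    _ = ENNReal.ofReal (r₀ ^ p) * ENNReal.ofReal (g u) :=
                        ENNReal.ofReal_mul (Real.rpow_nonneg hr₀.le _)
              _ = ENNReal.ofReal (r₀ ^ p) * ∫⁻ u in Ioo 0 a, ENNReal.ofReal (g u) :=
                  lintegral_const_mul' _ _ ENNReal.ofReal_ne_top
              _ ≤ ENNReal.ofReal (r₀ ^ p) * ∫⁻ u in Ioo 0 r₀, ENNReal.ofReal (g u) :=
                  mul_le_mul_right (lintegral_mono_set (Ioo_subset_Ioo_right har)) _
              _ < ⊤ := ENNReal.mul_lt_top ENNReal.ofReal_lt_top hI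
    exact (h2.union h1).mono_set hsub_union
  refine ⟨⟨hpart1, htend0⟩, hlog_int, fun hp0 => ⟨?_, ?_⟩⟩
  · -- limsup
    have h2p : (2:ℝ) ^ (-p) < 1 :=
      Real.rpow_lt_one_of_one_lt_of_neg one_lt_two (neg_lt_zero.2 hp0)
    set c := (1 - (2:ℝ) ^ (-p)) / p with hcdef
    have hcpos : 0 < c := div_pos (by linarith) hp0
    have hdouble : Tendsto (fun r : ℝ => 2 * r) (𝓝[>] (0:ℝ)) (𝓝[>] (0:ℝ)) := by
      rw [tendsto_nhdsWithin_iff]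
      constructor
      · have hcont : Continuous fun r : ℝ => 2 * r := continuous_const.mul continuous_id
        exact (hcont.tendsto' 0 0 (by norm_num)).mono_left nhdsWithin_le_nhds
      · filter_upwards [self_mem_nhdsWithin] with x hx
        exact mem_Ioi.2 (mul_pos two_pos hx)
    have hup : Tendsto (fun r : ℝ => c⁻¹ * G (2 * r)) (𝓝[>] (0:ℝ)) (𝓝 0) := by
      have := (hGtend.comp hdouble).const_mul c⁻¹
      simpa using this
    have hC : Tendsto (fun r : ℝ => f r * r ^ (-p)) (𝓝[>] (0:ℝ)) (𝓝 0) := by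
      apply tendsto_of_tendsto_of_tendsto_of_le_of_le' tendsto_const_nhds hup
      · filter_upwards [Ioo_mem_nhdsGT_of_mem
          (show (0:ℝ) ∈ Ico 0 r₀ from ⟨le_rfl, hr₀⟩)] with r hr
        exact mul_nonneg (hf_nonneg r ⟨hr.1, hr.2.le⟩) (Real.rpow_nonneg hr.1.le _)
      · filter_upwards [Ioo_mem_nhdsGT_of_mem
          (show (0:ℝ) ∈ Ico 0 (r₀/2) from ⟨le_rfl, by positivity⟩)] with r hr
        obtain ⟨hr0, hru⟩ := hr
        have h2r : 2 * r < r₀ := by linarith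
        have hr2 : r < 2 * r := by linarith
        have hsub : Ioo r (2*r) ⊆ Ioo 0 r₀ := fun u hu => ⟨hr0.trans hu.1, hu.2.trans h2r⟩
        have int2 : IntegrableOn g (Ioo r (2*r)) volume := hg_int.mono_set hsub
        have int1 : IntegrableOn (fun u : ℝ => f r * (p * u ^ (-(p+1)))) (Ioo r (2*r)) volume := by
          apply Integrable.const_mul
          apply (ContinuousOn.integrableOn_compact isCompact_Icc ?_).mono_set Ioo_subset_Icc_self
          exact continuousOn_const.mul (ContinuousOn.rpow_const continuousOn_id
            (fun x hx => Or.inl (ne_of_gt (lt_of_lt_of_le hr0 hx.1))))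
        have int3 : IntegrableOn (fun u : ℝ => p * g u) (Ioo r (2*r)) volume := int2.const_mul _
        have key : c * (f r * r ^ (-p)) ≤ G (2*r) := by
          calc c * (f r * r ^ (-p))
              = f r * (r ^ (-p) - (2*r) ^ (-p)) / p := by
                rw [hcdef, Real.mul_rpow (by norm_num : (0:ℝ) ≤ 2) hr0.le]
                field_simp
            _ = (∫ u in Ioo r (2*r), f r * (p * u ^ (-(p+1)))) / p := by
                rw [MeasureTheory.integral_const_mul, aux_integral_rpow_Ioo hp0 hr0 hr2.le]
            _ ≤ (∫ u in Ioo r (2*r), p * g u) / p := by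
                gcongr ?_ / _
                apply setIntegral_mono_on int1 int3 measurableSet_Ioo
                intro u hu
                have hu0 : 0 < u := hr0.trans hu.1
                have hrw : u ^ (-(p+1)) = (u ^ (p+1))⁻¹ := Real.rpow_neg hu0.le _
                calc f r * (p * u ^ (-(p+1))) = p * (f r * (u ^ (p+1))⁻¹) := by rw [hrw]; ring
                  _ ≤ p * (f u * (u ^ (p+1))⁻¹) := by
                      apply mul_le_mul_of_nonneg_left ?_ hp0.le
                      exact mul_le_mul_of_nonneg_right (f.mono hu.1.le)
                        (inv_nonneg.2 (Real.rpow_nonneg hu0.le _))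
                  _ = p * g u := by rw [hgdef]; simp only [div_eq_mul_inv]
            _ = ∫ u in Ioo r (2*r), g u := by
                rw [MeasureTheory.integral_const_mul, mul_div_cancel_left₀ _ (ne_of_gt hp0)]
            _ ≤ G (2*r) := by
                apply setIntegral_mono_set (hg_int.mono_set (Ioo_subset_Ioo_right h2r.le)) ?_ ?_
                · filter_upwards [ae_restrict_mem measurableSet_Ioo] with u hu
                  exact hg_nn u ⟨hu.1, hu.2.trans h2r⟩
                · exact (Ioo_subset_Ioo_left hr0.le).eventuallyLE
        calc f r * r ^ (-p) = c⁻¹ * (c * (f r * r ^ (-p))) := by field_simp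
          _ ≤ c⁻¹ * G (2*r) := mul_le_mul_of_nonneg_left key (inv_nonneg.2 hcpos.le)
    have heq : (fun r : ℝ => |f r| / r ^ p) =ᶠ[𝓝[>] (0:ℝ)] fun r => f r * r ^ (-p) := by
      filter_upwards [Ioo_mem_nhdsGT_of_mem
        (show (0:ℝ) ∈ Ico 0 r₀ from ⟨le_rfl, hr₀⟩)] with r hr
      rw [abs_of_nonneg (hf_nonneg r ⟨hr.1, hr.2.le⟩), Real.rpow_neg hr.1.le, div_eq_mul_inv]
    exact (hC.congr' heq.symm).limsup_eq
  · -- integrability of t ^ (-p)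
    have h1 : IntegrableOn (fun t : ℝ => t ^ (-p)) (Ico a r₀) f.measure := by
      apply (ContinuousOn.integrableOn_compact isCompact_Icc ?_).mono_set Ico_subset_Icc_self
      exact ContinuousOn.rpow_const continuousOn_id
        (fun x hx => Or.inl (ne_of_gt (lt_of_lt_of_le ha0 hx.1)))
    have h2 : IntegrableOn (fun t : ℝ => t ^ (-p)) (Ioo 0 a) f.measure := by
      refine ⟨(measurable_id.pow_const _).aestronglyMeasurable, ?_⟩
      rw [hasFiniteIntegral_iff_norm]
      calc ∫⁻ t in Ioo 0 a, ENNReal.ofReal ‖t ^ (-p)‖ ∂f.measure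
          ≤ ∫⁻ t in Ioo 0 a, (ENNReal.ofReal (t ^ (-p) - a ^ (-p))
              + ENNReal.ofReal (a ^ (-p))) ∂f.measure := by
            apply lintegral_mono_ae
            filter_upwards [ae_restrict_mem measurableSet_Ioo] with t ht
            rw [Real.norm_eq_abs, abs_of_nonneg (Real.rpow_nonneg ht.1.le _)]
            calc ENNReal.ofReal (t ^ (-p))
                = ENNReal.ofReal ((t ^ (-p) - a ^ (-p)) + a ^ (-p)) := by congr 1; ring
              _ ≤ _ := ENNReal.ofReal_add_le
        _ = (∫⁻ t in Ioo 0 a, ENNReal.ofReal (t ^ (-p) - a ^ (-p)) ∂f.measure)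
              + ENNReal.ofReal (a ^ (-p)) * f.measure (Ioo 0 a) := by
            rw [lintegral_add_right _ measurable_const, setLIntegral_const]
        _ < ⊤ := by
            refine ENNReal.add_lt_top.2 ⟨?_, ENNReal.mul_lt_top ENNReal.ofReal_lt_top hμa⟩
            have hwm : Measurable fun u : ℝ => ENNReal.ofReal (p * u ^ (-(p+1))) :=
              ENNReal.measurable_ofReal.comp (measurable_const.mul (measurable_id.pow_const _))
            have hkey : (∫⁻ t in Ioo 0 a, ENNReal.ofReal (t ^ (-p) - a ^ (-p)) ∂f.measure)
                = ∫⁻ u in Ioo 0 a, ENNReal.ofReal (p * u ^ (-(p+1))) * f.measure (Ioo 0 u) := by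
              rw [← aux_swap f.measure ha0 _ hwm]
              apply setLIntegral_congr_fun measurableSet_Ioo
              intro t ht
              exact (aux_lintegral_rpow_Ioo hp0 ht.1 ht.2.le).symm
            rw [hkey]
            calc ∫⁻ u in Ioo 0 a, ENNReal.ofReal (p * u ^ (-(p+1))) * f.measure (Ioo 0 u)
                ≤ ∫⁻ u in Ioo 0 a, ENNReal.ofReal p * ENNReal.ofReal (g u) := by
                  apply lintegral_mono_ae
                  filter_upwards [ae_restrict_mem measurableSet_Ioo] with u hu
                  have hu0 : 0 < u := hu.1
                  have hrw : u ^ (-(p+1)) = (u ^ (p+1))⁻¹ := Real.rpow_neg hu0.le _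
                  calc ENNReal.ofReal (p * u ^ (-(p+1))) * f.measure (Ioo 0 u)
                      ≤ ENNReal.ofReal (p * u ^ (-(p+1))) * ENNReal.ofReal (f u) :=
                        mul_le_mul_right (hμub u) _
                    _ = ENNReal.ofReal (p * u ^ (-(p+1)) * f u) :=
                        (ENNReal.ofReal_mul (mul_nonneg hp0.le (Real.rpow_nonneg hu0.le _))).symm
                    _ = ENNReal.ofReal (p * g u) := by
                        rw [hgdef]
                        simp only [div_eq_mul_inv, hrw]
                        ring_nf
                    _ = ENNReal.ofReal p * ENNReal.ofReal (g u) := ENNReal.ofReal_mul hp0.le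
              _ = ENNReal.ofReal p * ∫⁻ u in Ioo 0 a, ENNReal.ofReal (g u) :=
                  lintegral_const_mul' _ _ ENNReal.ofReal_ne_top
              _ ≤ ENNReal.ofReal p * ∫⁻ u in Ioo 0 r₀, ENNReal.ofReal (g u) :=
                  mul_le_mul_right (lintegral_mono_set (Ioo_subset_Ioo_right har)) _
              _ < ⊤ := ENNReal.mul_lt_top ENNReal.ofReal_lt_top hI
    exact (h2.union h1).mono_set hsub_union
end

section
/- Let t₁ < t₂ be real, b > 1, and let z be a complex number with Im z > 0 satisfying |z − (t₁+t₂)/2| ≥ b·(t₂−t₁)/2 (so z lies outside the open half-disk scaled by b over the segment [t₁,t₂]). Then ω(z,[t₁,t₂]) ≥ ((b−1)/(2πb)) · (t₂−t₁)·Im z / (|z|² − Re z·(t₁+t₂) + t₁t₂) ≥ ((b−1)/(2πb)) · (t₂−t₁)·Im z / ((|z| + |t₁|)·(|z| + |t₂|)). -/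
open Real

lemma aux_arctan_ge {u : ℝ} (hu : 0 ≤ u) : u / (1 + u) ≤ Real.arctan u := by
  have hmono : MonotoneOn (fun t : ℝ => Real.arctan t - t / (1 + t)) (Set.Ici 0) := by
    have hd : ∀ x : ℝ, 0 < x → HasDerivAt (fun t : ℝ => Real.arctan t - t / (1 + t))
        (1 / (1 + x ^ 2) - 1 / (1 + x) ^ 2) x := by
      intro x hx
      have h1 : HasDerivAt Real.arctan (1 / (1 + x ^ 2)) x := Real.hasDerivAt_arctan x
      have h2 : HasDerivAt (fun t : ℝ => t / (1 + t)) (1 / (1 + x) ^ 2) x := by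
        have hne : (1 : ℝ) + x ≠ 0 := by positivity
        have : HasDerivAt (fun t : ℝ => t / (1 + t)) _ x := ((hasDerivAt_id' x).div ((hasDerivAt_const x (1:ℝ)).add (hasDerivAt_id' x)) hne)
        convert this using 1
        field_simp
        try ring
      exact h1.sub h2
    apply monotoneOn_of_deriv_nonneg (convex_Ici 0)
    · apply ContinuousOn.sub Real.continuous_arctan.continuousOn
      apply ContinuousOn.div continuousOn_id (by fun_prop)
      intro x hx
      have hx0 : (0:ℝ) ≤ x := hx
      exact ne_of_gt (by linarith : (0:ℝ) < 1 + x)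
    · intro x hx
      rw [interior_Ici] at hx
      exact (hd x hx).differentiableAt.differentiableWithinAt
    · intro x hx
      rw [interior_Ici] at hx
      rw [(hd x hx).deriv]
      have h1 : (1 + x ^ 2) ≤ (1 + x) ^ 2 := by nlinarith [(Set.mem_Ioi.mp hx).le]
      have h2 : (0:ℝ) < 1 + x ^ 2 := by positivity
      have := one_div_le_one_div_of_le h2 h1
      linarith
  have h0 := hmono (Set.self_mem_Ici (a := (0:ℝ))) (Set.mem_Ici.mpr hu) hu
  simp only [Real.arctan_zero] at h0
  norm_num at h0
  linarith

/-- The harmonic measure of the segment `[t₁, t₂] ⊂ ℝ` at a point `z` of the open upper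
half-plane: `ω(z,[t₁,t₂]) = (1/π)·(arctan((t₂ - Re z)/Im z) - arctan((t₁ - Re z)/Im z))`. -/
noncomputable def hmUHP (z : ℂ) (t₁ t₂ : ℝ) : ℝ :=
  (1 / Real.pi) *
    (Real.arctan ((t₂ - z.re) / z.im) - Real.arctan ((t₁ - z.re) / z.im))

set_option maxHeartbeats 1000000 in
/-- Proposition `es:qmlw`: if `b > 1` and `z` in the upper half-plane satisfies
`|z - (t₁+t₂)/2| ≥ b·(t₂-t₁)/2`, then
`ω(z,[t₁,t₂]) ≥ ((b-1)/(2πb))·(t₂-t₁)·Im z/(|z|² - Re z·(t₁+t₂) + t₁t₂)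
              ≥ ((b-1)/(2πb))·(t₂-t₁)·Im z/((|z|+|t₁|)·(|z|+|t₂|))`. -/
theorem hmUHP_lower_bound_outside_scaled_halfdisk
    (t₁ t₂ : ℝ) (h12 : t₁ < t₂) (b : ℝ) (hb : 1 < b) (z : ℂ) (hz : 0 < z.im)
    (hout : b * ((t₂ - t₁) / 2) ≤ ‖z - ((((t₁ + t₂) / 2 : ℝ)) : ℂ)‖) :
    ((b - 1) / (2 * Real.pi * b)) * ((t₂ - t₁) * z.im /
        (‖z‖ ^ 2 - z.re * (t₁ + t₂) + t₁ * t₂)) ≤ hmUHP z t₁ t₂ ∧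
    ((b - 1) / (2 * Real.pi * b)) * ((t₂ - t₁) * z.im /
        ((‖z‖ + |t₁|) * (‖z‖ + |t₂|)))
      ≤ ((b - 1) / (2 * Real.pi * b)) * ((t₂ - t₁) * z.im /
        (‖z‖ ^ 2 - z.re * (t₁ + t₂) + t₁ * t₂)) := by
  set x := z.re with hx
  set y := z.im with hy
  have habs : ‖z‖ ^ 2 = x ^ 2 + y ^ 2 := by
    rw [Complex.sq_norm, Complex.normSq_apply, ← hx, ← hy]; ring
  set r : ℝ := (t₂ - t₁) / 2 with hr
  set c : ℝ := (t₁ + t₂) / 2 with hc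
  have hrpos : 0 < r := by rw [hr]; linarith
  have hq : b ^ 2 * r ^ 2 ≤ (x - c) ^ 2 + y ^ 2 := by
    have h1 : (b * r) ^ 2 ≤ ‖z - (c : ℂ)‖ ^ 2 := by
      apply sq_le_sq' _ hout
      have : 0 ≤ b * r := by positivity
      linarith [norm_nonneg (z - (c : ℂ))]
    have h2 : ‖z - (c : ℂ)‖ ^ 2 = (x - c) ^ 2 + y ^ 2 := by
      rw [Complex.sq_norm, Complex.normSq_apply]
      simp only [Complex.sub_re, Complex.sub_im, Complex.ofReal_re, Complex.ofReal_im,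
        ← hx, ← hy]
      ring
    rw [h2] at h1
    nlinarith
  set D : ℝ := ‖z‖ ^ 2 - x * (t₁ + t₂) + t₁ * t₂ with hD
  have hDeq : D = (x - c) ^ 2 + y ^ 2 - r ^ 2 := by
    rw [hD, habs, hr, hc]; ring
  have hDpos : 0 < D := by
    have h6 : 0 < r ^ 2 := pow_pos hrpos 2
    have h7 : 1 < b ^ 2 := by nlinarith
    have h5 : r ^ 2 < b ^ 2 * r ^ 2 := by nlinarith [h6, h7]
    rw [hDeq]; linarith
  set u : ℝ := (t₂ - t₁) * y / D with hu
  have hupos : 0 < u := by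
    apply div_pos _ hDpos
    nlinarith
  have ht2r : t₂ - t₁ = 2 * r := by rw [hr]; ring
  have hule : u ≤ (b + 1) / (b - 1) := by
    rw [hu, div_le_div_iff₀ hDpos (by linarith), ht2r, hDeq]
    rcases le_or_gt y (b * r) with hyb | hyb
    · nlinarith [sq_nonneg (x - c), mul_pos hrpos hz, mul_pos hrpos hrpos,
        mul_le_mul_of_nonneg_left hyb (by nlinarith [hrpos] : (0:ℝ) ≤ 2 * r * (b - 1)),
        sq_nonneg (b - 1)]
    · nlinarith [sq_nonneg (x - c), mul_pos hrpos hz, mul_pos hrpos hrpos,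
        mul_pos (sub_pos.mpr hyb) hz,
        mul_nonneg (sub_pos.mpr hyb).le (sub_pos.mpr hyb).le,
        mul_nonneg (mul_nonneg (sub_pos.mpr hyb).le (sub_pos.mpr hb).le) hz.le,
        mul_nonneg (mul_nonneg (sub_pos.mpr hyb).le (sub_pos.mpr hb).le) hrpos.le]
  -- arctan lower bound
  have harct : ((b - 1) / (2 * b)) * u ≤ Real.arctan u := by
    have h1 : u / (1 + u) ≤ Real.arctan u := aux_arctan_ge hupos.le
    have h3 : u * (b - 1) ≤ b + 1 := (le_div_iff₀ (by linarith : (0:ℝ) < b - 1)).mp hule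
    have h2 : ((b - 1) / (2 * b)) * u ≤ u / (1 + u) := by
      rw [div_mul_eq_mul_div, div_le_div_iff₀ (by linarith) (by linarith)]
      nlinarith [hupos]
    linarith
  -- the key identity
  have hyne : y ≠ 0 := ne_of_gt hz
  have hDne : D ≠ 0 := ne_of_gt hDpos
  have hkey : hmUHP z t₁ t₂ = (1 / Real.pi) * Real.arctan u := by
    rw [hmUHP, ← hx, ← hy]
    congr 1
    rw [sub_eq_add_neg, ← Real.arctan_neg]
    have hden : (1 : ℝ) - (t₂ - x) / y * -((t₁ - x) / y) = D / y ^ 2 := by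
      rw [hD, habs]
      field_simp
      ring
    have hcond : (t₂ - x) / y * -((t₁ - x) / y) < 1 := by
      have h4 : 0 < D / y ^ 2 := by positivity
      have := hden
      nlinarith [h4]
    rw [Real.arctan_add hcond]
    congr 1
    have hy2 : D / y ^ 2 ≠ 0 := by positivity
    rw [hden, hu, div_eq_div_iff hy2 hDne]
    field_simp
    ring
  have hpi : 0 < Real.pi := Real.pi_pos
  constructor
  · rw [hkey]
    have hmul := mul_le_mul_of_nonneg_left harct (le_of_lt (one_div_pos.mpr hpi))
    have hcoef : (b - 1) / (2 * Real.pi * b) = 1 / Real.pi * ((b - 1) / (2 * b)) := by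
      rw [div_mul_div_comm, one_mul]
      ring_nf
    rw [hcoef, mul_assoc]
    exact hmul
  · have hnum : 0 ≤ (t₂ - t₁) * y := by nlinarith
    have hDle : D ≤ (‖z‖ + |t₁|) * (‖z‖ + |t₂|) := by
      have h1 : -(x * t₁) ≤ ‖z‖ * |t₁| := by
        calc -(x * t₁) ≤ |x * t₁| := neg_le_abs _
          _ = |x| * |t₁| := abs_mul _ _
          _ ≤ ‖z‖ * |t₁| :=
              mul_le_mul_of_nonneg_right (Complex.abs_re_le_norm z) (abs_nonneg _)
      have h2 : -(x * t₂) ≤ ‖z‖ * |t₂| := by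
        calc -(x * t₂) ≤ |x * t₂| := neg_le_abs _
          _ = |x| * |t₂| := abs_mul _ _
          _ ≤ ‖z‖ * |t₂| :=
              mul_le_mul_of_nonneg_right (Complex.abs_re_le_norm z) (abs_nonneg _)
      have h3 : t₁ * t₂ ≤ |t₁| * |t₂| := by rw [← abs_mul]; exact le_abs_self _
      have h4 : (‖z‖ + |t₁|) * (‖z‖ + |t₂|)
          = ‖z‖ ^ 2 + ‖z‖ * |t₂| + ‖z‖ * |t₁| + |t₁| * |t₂| := by
        ring
      rw [hD, h4]
      nlinarith
    have hc0 : 0 ≤ (b - 1) / (2 * Real.pi * b) := by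
      apply div_nonneg (by linarith)
      positivity
    apply mul_le_mul_of_nonneg_left _ hc0
    exact div_le_div_of_nonneg_left hnum hDpos hDle
end

section
/- Let t₁ < t₂ be real, a ∈ (0,1), and let z be a complex number with Im z > 0 satisfying a·|z| ≥ max(|t₁|,|t₂|). Then ω(z,[t₁,t₂]) ≥ (t₂−t₁)·(1−a)/(8π) · Im z/|z|². -/
open Real

set_option maxHeartbeats 1000000 in
/-- Proposition `pr:gmA+`: for `a ∈ (0,1)` and `z` in the upper half-plane with
`a·|z| ≥ max(|t₁|,|t₂|)`, one has `ω(z,[t₁,t₂]) ≥ (t₂-t₁)·(1-a)/(8π)·Im z/|z|²`. -/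
theorem hmUHP_lower_bound_far
    (t₁ t₂ : ℝ) (h12 : t₁ < t₂) (a : ℝ) (ha : a ∈ Set.Ioo (0 : ℝ) 1)
    (z : ℂ) (hz : 0 < z.im) (hfar : max |t₁| |t₂| ≤ a * ‖z‖) :
    (t₂ - t₁) * (1 - a) / (8 * Real.pi) * (z.im / ‖z‖ ^ 2)
      ≤ hmUHP z t₁ t₂ := by
  obtain ⟨ha0, ha1⟩ := ha
  have hzne : z ≠ 0 := by
    intro h; rw [h] at hz; simp at hz
  have hsq : ‖z‖ ^ 2 = z.re * z.re + z.im * z.im := by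
    rw [Complex.sq_norm, Complex.normSq_apply]
  set x := z.re with hx
  set y := z.im with hy
  set R := ‖z‖ with hR
  have hR0 : 0 < R := norm_pos_iff.mpr hzne
  have hRsq : x ^ 2 + y ^ 2 = R ^ 2 := by rw [hsq]; ring
  have hxR : |x| ≤ R := Complex.abs_re_le_norm z
  have ht1 : |t₁| ≤ a * R := le_trans (le_max_left _ _) hfar
  have ht2 : |t₂| ≤ a * R := le_trans (le_max_right _ _) hfar
  clear_value x y R
  set u₁ := (t₁ - x) / y with hu1
  set u₂ := (t₂ - x) / y with hu2
  have hu12 : u₁ < u₂ := by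
    rw [hu1, hu2, div_lt_div_iff_of_pos_right hz]
    linarith
  -- Mean value theorem for arctan on [u₁, u₂]
  obtain ⟨c, hc, hceq⟩ := exists_hasDerivAt_eq_slope Real.arctan
    (fun v => 1 / (1 + v ^ 2)) hu12
    (Real.continuous_arctan.continuousOn)
    (fun v _ => Real.hasDerivAt_arctan v)
  have hceq' : 1 / (1 + c ^ 2)
      = (Real.arctan u₂ - Real.arctan u₁) / (u₂ - u₁) := hceq
  -- the point t = x + c·y lies in (t₁, t₂)
  set t := x + c * y with hct
  clear_value u₁ u₂ t
  have hct1 : t₁ < t := by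
    have h := hc.1
    rw [hu1, div_lt_iff₀ hz] at h
    rw [hct]; linarith
  have hct2 : t < t₂ := by
    have h := hc.2
    rw [hu2, lt_div_iff₀ hz] at h
    rw [hct]; linarith
  have htle : |t| ≤ a * R := by
    rw [abs_le]; constructor
    · have h1 : -(a * R) ≤ t₁ := by linarith [neg_abs_le t₁]
      linarith
    · have h2 : t₂ ≤ a * R := le_trans (le_abs_self t₂) ht2
      linarith
  -- key bound: (1 + c²) y² ≤ 4 R²
  have hkey : (1 + c ^ 2) * y ^ 2 ≤ 4 * R ^ 2 := by
    have h1 : (1 + c ^ 2) * y ^ 2 = (t - x) ^ 2 + y ^ 2 := by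
      rw [hct]; ring
    have h2 : (t - x) ^ 2 + y ^ 2 = t ^ 2 - 2 * t * x + R ^ 2 := by
      rw [← hRsq]; ring
    have h3 : -(2 * t * x) ≤ 2 * (a * R) * R := by
      have habs : |2 * t * x| ≤ 2 * (a * R) * R := by
        rw [abs_mul, abs_mul, show |(2:ℝ)| = 2 by norm_num]
        have hprod : |t| * |x| ≤ (a * R) * R :=
          mul_le_mul htle hxR (abs_nonneg x) (le_trans (abs_nonneg t) htle)
        linarith
      linarith [neg_abs_le (2 * t * x)]
    have h4 : t ^ 2 ≤ (a * R) ^ 2 := by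
      nlinarith [abs_nonneg t, sq_abs t]
    nlinarith [mul_nonneg (mul_nonneg (by linarith : (0:ℝ) ≤ 1 - a) (by linarith : (0:ℝ) ≤ a + 3)) (sq_nonneg R)]
  have hc2 : (0:ℝ) < 1 + c ^ 2 := by positivity
  have hune : u₂ - u₁ ≠ 0 := sub_ne_zero.mpr hu12.ne'
  have hslope : Real.arctan u₂ - Real.arctan u₁ = (u₂ - u₁) * (1 / (1 + c ^ 2)) := by
    rw [hceq', mul_comm, div_mul_cancel₀ _ hune]
  have hu21 : u₂ - u₁ = (t₂ - t₁) / y := by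
    rw [hu1, hu2, div_sub_div_same]; ring_nf
  have hdiffle : (t₂ - t₁) * y / (4 * R ^ 2) ≤ Real.arctan u₂ - Real.arctan u₁ := by
    rw [hslope, hu21, mul_one_div, div_div]
    rw [div_le_div_iff₀ (mul_pos (by norm_num : (0:ℝ) < 4) (pow_pos hR0 2)) (mul_pos hz hc2)]
    have hmul := mul_le_mul_of_nonneg_left hkey (by linarith : (0:ℝ) ≤ t₂ - t₁)
    nlinarith [hmul]
  -- conclude
  simp only [hmUHP]
  rw [← hx, ← hy]
  have hpi : (0:ℝ) < Real.pi := Real.pi_pos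
  have hP : (0:ℝ) < (t₂ - t₁) * (y / R ^ 2) :=
    mul_pos (by linarith) (div_pos hz (pow_pos hR0 2))
  have hc48 : (1 - a) / (8 * Real.pi) ≤ 1 / (4 * Real.pi) := by
    rw [div_le_div_iff₀ (by positivity) (by positivity)]
    nlinarith
  calc (t₂ - t₁) * (1 - a) / (8 * Real.pi) * (y / R ^ 2)
      = (1 - a) / (8 * Real.pi) * ((t₂ - t₁) * (y / R ^ 2)) := by ring
    _ ≤ 1 / (4 * Real.pi) * ((t₂ - t₁) * (y / R ^ 2)) :=
        mul_le_mul_of_nonneg_right hc48 hP.le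
    _ = (1 / Real.pi) * ((t₂ - t₁) * y / (4 * R ^ 2)) := by ring
    _ ≤ (1 / Real.pi) * (Real.arctan u₂ - Real.arctan u₁) := by
        apply mul_le_mul_of_nonneg_left hdiffle (by positivity)
    _ = (1 / Real.pi) * (Real.arctan ((t₂ - x) / y) - Real.arctan ((t₁ - x) / y)) := by
        rw [hu1, hu2]
end

section
/- Let 0 ≤ t₁ < t₂ < ∞ and let z be a complex number with Im z > 0. (1) If Re z ≤ 0 (i.e. π/2 ≤ arg z < π), then ω(z,[t₁,t₂]) ≤ (t₂−t₁)·(1/π)·Im z/|z|². (2) If Re z·(t₁+t₂) < 2·|z|·√(t₁t₂) (i.e. cos(arg z) < 2√(t₁t₂)/(t₁+t₂)) and |z| ≠ √(t₁t₂), then ω(z,[t₁,t₂]) ≤ (t₂−t₁)·Im z / (π·(|z| − √(t₁t₂))²). (3) If a ∈ (0,1) and Re z·(t₁+t₂) ≤ 2a·|z|·√(t₁t₂), then ω(z,[t₁,t₂]) ≤ (t₂−t₁)/(π·(1−a²)) · Im z/|z|². -/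
open Real

lemma arctan_le_self' {x : ℝ} (hx : 0 ≤ x) : Real.arctan x ≤ x := by
  calc Real.arctan x ≤ Real.tan (Real.arctan x) :=
        Real.le_tan (by simpa using Real.arctan_strictMono.monotone hx)
          (Real.arctan_lt_pi_div_two x)
    _ = x := Real.tan_arctan x

lemma hm_key (z : ℂ) (t₁ t₂ : ℝ) (hz : 0 < z.im) (h12 : t₁ ≤ t₂)
    (hD : 0 < z.im ^ 2 + (t₂ - z.re) * (t₁ - z.re)) :
    hmUHP z t₁ t₂ ≤ (1 / Real.pi) *
      ((t₂ - t₁) * z.im / (z.im ^ 2 + (t₂ - z.re) * (t₁ - z.re))) := by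
  set A := (t₂ - z.re) / z.im
  set B := (t₁ - z.re) / z.im
  have hmul : A * (-B) < 1 := by
    have : A * (-B) = -((t₂ - z.re) * (t₁ - z.re)) / z.im ^ 2 := by
      simp only [A, B]; field_simp
    rw [this, div_lt_one (by positivity)]
    nlinarith
  have hident : Real.arctan A - Real.arctan B =
      Real.arctan ((t₂ - t₁) * z.im / (z.im ^ 2 + (t₂ - z.re) * (t₁ - z.re))) := by
    have h := Real.arctan_add hmul
    rw [sub_eq_add_neg, ← Real.arctan_neg, h]
    congr 1
    rw [div_eq_div_iff (by nlinarith [sq_nonneg z.im] : (0:ℝ) < 1 - A * -B).ne' hD.ne']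
    simp only [A, B]
    field_simp
    ring
  have hx : 0 ≤ (t₂ - t₁) * z.im / (z.im ^ 2 + (t₂ - z.re) * (t₁ - z.re)) := by
    apply div_nonneg _ hD.le
    nlinarith
  rw [hmUHP, hident]
  have hπ : 0 < (1:ℝ) / Real.pi := by positivity
  exact mul_le_mul_of_nonneg_left (arctan_le_self' hx) hπ.le


/-- Proposition `pr:gmAa`: for `0 ≤ t₁ < t₂` and `z` in the upper half-plane:
(1) if `Re z ≤ 0` then `ω(z,[t₁,t₂]) ≤ (t₂-t₁)·(1/π)·Im z/|z|²`;
(2) if `cos(arg z) < 2√(t₁t₂)/(t₁+t₂)`, i.e. `Re z·(t₁+t₂) < 2|z|·√(t₁t₂)`, and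
`|z| ≠ √(t₁t₂)`, then `ω(z,[t₁,t₂]) ≤ (t₂-t₁)·Im z/(π(|z| - √(t₁t₂))²)`;
(3) if `a ∈ (0,1)` and `Re z·(t₁+t₂) ≤ 2a|z|·√(t₁t₂)`, then
`ω(z,[t₁,t₂]) ≤ (t₂-t₁)/(π(1-a²))·Im z/|z|²`. -/
theorem hmUHP_upper_bounds_positive_segment
    (t₁ t₂ : ℝ) (h1 : 0 ≤ t₁) (h12 : t₁ < t₂) (z : ℂ) (hz : 0 < z.im) :
    (z.re ≤ 0 →
      hmUHP z t₁ t₂ ≤ (t₂ - t₁) * (1 / Real.pi) * (z.im / ‖z‖ ^ 2)) ∧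
    (z.re * (t₁ + t₂) < 2 * ‖z‖ * Real.sqrt (t₁ * t₂) →
      ‖z‖ ≠ Real.sqrt (t₁ * t₂) →
      hmUHP z t₁ t₂
        ≤ (t₂ - t₁) * z.im / (Real.pi * (‖z‖ - Real.sqrt (t₁ * t₂)) ^ 2)) ∧
    (∀ a ∈ Set.Ioo (0 : ℝ) 1,
      z.re * (t₁ + t₂) ≤ 2 * a * ‖z‖ * Real.sqrt (t₁ * t₂) →
      hmUHP z t₁ t₂
        ≤ (t₂ - t₁) / (Real.pi * (1 - a ^ 2)) * (z.im / ‖z‖ ^ 2)) := by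
  set u := ‖z‖ with hu_def
  set s := Real.sqrt (t₁ * t₂) with hs_def
  have hzne : z ≠ 0 := fun h => by simp [h] at hz
  have hu : 0 < u := norm_pos_iff.mpr hzne
  have hu2 : u ^ 2 = z.re ^ 2 + z.im ^ 2 := by
    rw [hu_def, Complex.sq_norm, Complex.normSq_apply]; ring
  have hs0 : 0 ≤ s := Real.sqrt_nonneg _
  have hs2 : s ^ 2 = t₁ * t₂ := Real.sq_sqrt (mul_nonneg h1 (by linarith))
  have hDval : z.im ^ 2 + (t₂ - z.re) * (t₁ - z.re)
      = u ^ 2 + s ^ 2 - z.re * (t₁ + t₂) := by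
    rw [hu2, hs2]; ring
  have hpi : (0:ℝ) < Real.pi := Real.pi_pos
  have him : (0:ℝ) ≤ (t₂ - t₁) * z.im := by nlinarith
  refine ⟨?_, ?_, ?_⟩
  · intro hre
    have hret : z.re * (t₁ + t₂) ≤ 0 := mul_nonpos_of_nonpos_of_nonneg hre (by nlinarith)
    have hD : 0 < z.im ^ 2 + (t₂ - z.re) * (t₁ - z.re) := by
      rw [hDval]; nlinarith
    refine (hm_key z t₁ t₂ hz h12.le hD).trans ?_
    have h2 : (t₂ - t₁) * z.im / (z.im ^ 2 + (t₂ - z.re) * (t₁ - z.re))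
        ≤ (t₂ - t₁) * z.im / u ^ 2 := by
      apply div_le_div_of_nonneg_left him (pow_pos hu 2)
      rw [hDval]; nlinarith
    calc (1 / Real.pi) * ((t₂ - t₁) * z.im / (z.im ^ 2 + (t₂ - z.re) * (t₁ - z.re)))
        ≤ (1 / Real.pi) * ((t₂ - t₁) * z.im / u ^ 2) := by
          exact mul_le_mul_of_nonneg_left h2 (by positivity)
      _ = (t₂ - t₁) * (1 / Real.pi) * (z.im / u ^ 2) := by ring
  · intro hlt hne
    have hus : 0 < (u - s) ^ 2 := by
      have : u - s ≠ 0 := sub_ne_zero.mpr hne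
      positivity
    have hD : 0 < z.im ^ 2 + (t₂ - z.re) * (t₁ - z.re) := by
      rw [hDval]; nlinarith
    refine (hm_key z t₁ t₂ hz h12.le hD).trans ?_
    rw [show (1 / Real.pi) * ((t₂ - t₁) * z.im / (z.im ^ 2 + (t₂ - z.re) * (t₁ - z.re)))
        = (t₂ - t₁) * z.im / (Real.pi * (z.im ^ 2 + (t₂ - z.re) * (t₁ - z.re))) by
          field_simp]
    apply div_le_div_of_nonneg_left him (by positivity)
    have : (u - s) ^ 2 ≤ z.im ^ 2 + (t₂ - z.re) * (t₁ - z.re) := by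
      rw [hDval]; nlinarith
    nlinarith
  · rintro a ⟨ha0, ha1⟩ hle
    have hau : (0:ℝ) < 1 - a ^ 2 := by nlinarith
    have hkey : (1 - a ^ 2) * u ^ 2 ≤ z.im ^ 2 + (t₂ - z.re) * (t₁ - z.re) := by
      rw [hDval]; nlinarith [sq_nonneg (s - a * u)]
    have hD : 0 < z.im ^ 2 + (t₂ - z.re) * (t₁ - z.re) := by
      have : 0 < (1 - a ^ 2) * u ^ 2 := by positivity
      linarith
    refine (hm_key z t₁ t₂ hz h12.le hD).trans ?_
    rw [show (1 / Real.pi) * ((t₂ - t₁) * z.im / (z.im ^ 2 + (t₂ - z.re) * (t₁ - z.re)))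
        = (t₂ - t₁) * z.im / (Real.pi * (z.im ^ 2 + (t₂ - z.re) * (t₁ - z.re))) by
          field_simp,
      show (t₂ - t₁) / (Real.pi * (1 - a ^ 2)) * (z.im / u ^ 2)
        = (t₂ - t₁) * z.im / (Real.pi * ((1 - a ^ 2) * u ^ 2)) by
          rw [div_mul_div_comm]; ring_nf]
    apply div_le_div_of_nonneg_left him (by positivity)
    nlinarith
end

section
/- Let μ be a positive Borel measure on ℂ, finite on compact sets, satisfying the Blaschke condition near infinity in the upper half-plane, and let μ̄ denote the restriction of μ to the closed upper half-plane {Im z ≥ 0}. Then the balayage μ^bal of μ out of the upper half-plane is a well-defined positive Borel measure finite on compact sets, and for all real t₁ < t₂ with t₁·t₂ ≥ 0 and every a ∈ (0,1), setting x₀ := (t₁+t₂)/2, r := (t₂−t₁)/2, and E := (t₁,t₂] if t₁ ≥ 0 and E := [t₁,t₂) if t₂ ≤ 0, one has 0 ≤ μ^bal(E) ≤ μ̄( {w : |w − x₀| ≤ r} ) + (2r/(a·|x₀|))·μ̄( {w : |w| ≤ 3|x₀|/a} ) + (r/(1−a)²)·∫_{{Im z ≥ 0, |z| ≥ |x₀|}}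 (Im z)/|z|² dμ(z) + r·max( 0, ∫_{r}^{a|x₀|} μ̄({w : |w − x₀| ≤ t})/t² dt ). -/
open MeasureTheory Filter Set
open scoped ENNReal

set_option maxHeartbeats 2000000

/-- The Poisson kernel of the upper half-plane at `z`, evaluated at `t ∈ ℝ`. -/
noncomputable def poisson (z : ℂ) (t : ℝ) : ℝ :=
  (1 / Real.pi) * z.im / ((t - z.re) ^ 2 + z.im ^ 2)

/-- The harmonic measure `ω(z,B)` of a Borel set `B ⊆ ℂ` at a point `z` of the upper
half-plane: the integral of the Poisson kernel over the real trace of `B`. -/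
noncomputable def omegaUHP (z : ℂ) (B : Set ℂ) : ℝ :=
  ∫ t in {t : ℝ | (t : ℂ) ∈ B}, poisson z t

/-- The balayage of a positive measure `μ` on `ℂ` out of the upper half-plane, as a set
function: `μ^bal(B) = ∫_{Im z>0} ω(z,B) dμ(z) + μ(B ∩ {Im z ≤ 0})`. -/
noncomputable def balUHP (μ : Measure ℂ) (B : Set ℂ) : ℝ≥0∞ :=
  (∫⁻ z in {z : ℂ | 0 < z.im}, ENNReal.ofReal (omegaUHP z B) ∂μ)
    + μ (B ∩ {z : ℂ | z.im ≤ 0})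

namespace BalAux

variable {z : ℂ} {p q : ℝ}

lemma denom_pos (hy : 0 < z.im) (t : ℝ) : 0 < (t - z.re) ^ 2 + z.im ^ 2 := by
  nlinarith [sq_nonneg (t - z.re)]

lemma poisson_nonneg (hy : 0 < z.im) (t : ℝ) : 0 ≤ poisson z t := by
  unfold poisson
  have h1 := denom_pos hy t
  have h2 := Real.pi_pos
  positivity

lemma poisson_cont (hy : 0 < z.im) : Continuous (poisson z) := by
  unfold poisson
  exact continuous_const.div (by continuity) (fun t => (denom_pos hy t).ne')

lemma poisson_intOn (hy : 0 < z.im) : IntegrableOn (poisson z) (Ioc p q) :=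
  (poisson_cont hy).integrableOn_Ioc

lemma omega_Ioc (hy : 0 < z.im) (hpq : p ≤ q) :
    ∫ t in Ioc p q, poisson z t
      = (1 / Real.pi) *
        (Real.arctan ((q - z.re) / z.im) - Real.arctan ((p - z.re) / z.im)) := by
  have hy' : z.im ≠ 0 := hy.ne'
  have hrw : ∀ t : ℝ, poisson z t
      = (1 / Real.pi) * z.im⁻¹ * (1 + (t / z.im - z.re / z.im) ^ 2)⁻¹ := by
    intro t
    have hD := (denom_pos hy t).ne'
    unfold poisson
    field_simp
    ring
  rw [← intervalIntegral.integral_of_le hpq]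
  simp_rw [hrw]
  rw [intervalIntegral.integral_const_mul,
    intervalIntegral.integral_comp_div_sub (f := fun u => (1 + u ^ 2)⁻¹) hy' (z.re / z.im),
    integral_inv_one_add_sq]
  simp only [sub_div]
  field_simp
  ring

lemma omega_nonneg (hy : 0 < z.im) : 0 ≤ ∫ t in Ioc p q, poisson z t :=
  setIntegral_nonneg measurableSet_Ioc (fun t _ => poisson_nonneg hy t)

lemma omega_le_one (hy : 0 < z.im) (hpq : p ≤ q) :
    ∫ t in Ioc p q, poisson z t ≤ 1 := by
  rw [omega_Ioc hy hpq]
  have h1 := Real.arctan_lt_pi_div_two ((q - z.re) / z.im)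
  have h2 := Real.neg_pi_div_two_lt_arctan ((p - z.re) / z.im)
  have hπ := Real.pi_pos
  rw [div_mul_eq_mul_div, div_le_one hπ]
  linarith

lemma sq_abs_sub (z : ℂ) (c : ℝ) :
    ‖z - (c : ℂ)‖ ^ 2 = (z.re - c) ^ 2 + z.im ^ 2 := by
  rw [Complex.sq_norm, Complex.normSq_apply]
  simp [Complex.sub_re, Complex.sub_im]
  ring

lemma omega_le_div (hy : 0 < z.im) (hr : 0 < (q - p) / 2)
    (hs : (q - p) / 2 ≤ ‖z - (((p + q) / 2 : ℝ) : ℂ)‖) :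
    ∫ t in Ioc p q, poisson z t
      ≤ ((q - p) / 2) / ‖z - (((p + q) / 2 : ℝ) : ℂ)‖ := by
  have hpq : p ≤ q := by linarith
  set x₀ : ℝ := (p + q) / 2 with hx₀
  set r : ℝ := (q - p) / 2 with hrdef
  set s : ℝ := ‖z - (x₀ : ℂ)‖ with hsdef
  have hs0 : 0 < s := lt_of_lt_of_le hr hs
  have hy' : z.im ≠ 0 := hy.ne'
  set x : ℝ := z.re with hx
  set y : ℝ := z.im with hyy
  have hs2 : s ^ 2 = (x - x₀) ^ 2 + y ^ 2 := sq_abs_sub z x₀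
  set a : ℝ := (p - x) / y with hadef
  set b : ℝ := (q - x) / y with hbdef
  set A : ℝ := Real.arctan b with hA
  set B : ℝ := Real.arctan a with hB
  have hab : a ≤ b := by
    rw [hadef, hbdef, div_le_div_iff_of_pos_right hy]
    linarith
  have hθ0 : 0 ≤ A - B := sub_nonneg.2 (Real.arctan_strictMono.monotone hab)
  have hπ := Real.pi_pos
  have hθπ : A - B < Real.pi := by
    have h1 := Real.arctan_lt_pi_div_two b
    have h2 := Real.neg_pi_div_two_lt_arctan a
    rw [hA, hB]; linarith
  have hsa : (0:ℝ) < Real.sqrt (1 + a ^ 2) := Real.sqrt_pos.2 (by positivity)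
  have hsb : (0:ℝ) < Real.sqrt (1 + b ^ 2) := Real.sqrt_pos.2 (by positivity)
  have hsin : Real.sin (A - B)
      = (b - a) / (Real.sqrt (1 + b ^ 2) * Real.sqrt (1 + a ^ 2)) := by
    rw [hA, hB, Real.sin_sub, Real.sin_arctan, Real.cos_arctan, Real.sin_arctan,
      Real.cos_arctan]
    field_simp
  have hcos : Real.cos (A - B)
      = (1 + b * a) / (Real.sqrt (1 + b ^ 2) * Real.sqrt (1 + a ^ 2)) := by
    rw [hA, hB, Real.cos_sub, Real.sin_arctan, Real.cos_arctan, Real.sin_arctan,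
      Real.cos_arctan]
    field_simp
  have hqp : (q - x) * (p - x) = (x - x₀) ^ 2 - r ^ 2 := by
    rw [hx₀, hrdef]; ring
  have hba : 0 ≤ 1 + b * a := by
    have h1 : 1 + b * a = (s ^ 2 - r ^ 2) / y ^ 2 := by
      rw [hbdef, hadef, hs2]
      field_simp
      linear_combination y ^ 2 * hqp
    rw [h1]
    have : 0 ≤ s ^ 2 - r ^ 2 := by nlinarith
    positivity
  have hcos0 : 0 ≤ Real.cos (A - B) := by
    rw [hcos]; positivity
  have hθhalf : A - B ≤ Real.pi / 2 := by
    by_contra h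
    push_neg at h
    have := Real.cos_neg_of_pi_div_two_lt_of_lt h (by linarith)
    linarith
  have hp' : p = x₀ - r := by rw [hx₀, hrdef]; ring
  have hq' : q = x₀ + r := by rw [hx₀, hrdef]; ring
  have key2 : s ^ 2 * y ^ 2 ≤ (y ^ 2 + (q - x) ^ 2) * (y ^ 2 + (p - x) ^ 2) := by
    rw [hp', hq']
    nlinarith [hs2, sq_nonneg ((x - x₀) ^ 2 - r ^ 2), sq_nonneg (y * (x - x₀)),
      sq_nonneg (y * r)]
  have e1 : 1 + a ^ 2 = (y ^ 2 + (p - x) ^ 2) / y ^ 2 := by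
    rw [hadef]; field_simp
  have e2 : 1 + b ^ 2 = (y ^ 2 + (q - x) ^ 2) / y ^ 2 := by
    rw [hbdef]; field_simp
  have hsq : (s / y) ^ 2 ≤ (1 + b ^ 2) * (1 + a ^ 2) := by
    rw [e1, e2, div_pow, div_mul_div_comm,
      div_le_div_iff₀ (by positivity) (by positivity)]
    calc s ^ 2 * (y ^ 2 * y ^ 2) = s ^ 2 * y ^ 2 * y ^ 2 := by ring
    _ ≤ (y ^ 2 + (q - x) ^ 2) * (y ^ 2 + (p - x) ^ 2) * y ^ 2 :=
        mul_le_mul_of_nonneg_right key2 (sq_nonneg y)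
  have key : s / y ≤ Real.sqrt (1 + b ^ 2) * Real.sqrt (1 + a ^ 2) := by
    have h1 : s / y = Real.sqrt ((s / y) ^ 2) := (Real.sqrt_sq (by positivity)).symm
    rw [h1, show Real.sqrt (1 + b ^ 2) * Real.sqrt (1 + a ^ 2)
        = Real.sqrt ((1 + b ^ 2) * (1 + a ^ 2)) from
          (Real.sqrt_mul (by positivity) _).symm]
    exact Real.sqrt_le_sqrt hsq
  have hba2 : b - a = 2 * r / y := by
    rw [hbdef, hadef, hrdef]
    field_simp
    ring
  have hsin_le : Real.sin (A - B) ≤ 2 * r / s := by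
    rw [hsin, hba2, div_le_div_iff₀ (by positivity) hs0]
    have h2 : 2 * r / y * s = 2 * r * (s / y) := by field_simp
    rw [h2]
    have := mul_le_mul_of_nonneg_left key (by linarith : (0:ℝ) ≤ 2 * r)
    linarith
  have hjordan := Real.mul_le_sin hθ0 hθhalf
  rw [omega_Ioc hy hpq]
  have h1 : 2 * (1 / Real.pi * (Real.arctan ((q - x) / y) - Real.arctan ((p - x) / y)))
      = 2 / Real.pi * (A - B) := by
    rw [hA, hB, hadef, hbdef]; ring
  have h2 : 2 * (r / s) = 2 * r / s := by ring
  linarith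

lemma omega_le_decay (hy : 0 < z.im) (hpq : p ≤ q)
    (hs : (q - p) / 2 < ‖z - (((p + q) / 2 : ℝ) : ℂ)‖) :
    ∫ t in Ioc p q, poisson z t
      ≤ (q - p) * ((1 / Real.pi) * z.im
          / (‖z - (((p + q) / 2 : ℝ) : ℂ)‖ - (q - p) / 2) ^ 2) := by
  set x₀ : ℝ := (p + q) / 2 with hx₀
  set r : ℝ := (q - p) / 2 with hrdef
  set s : ℝ := ‖z - (x₀ : ℂ)‖ with hsdef
  have hr0 : 0 ≤ r := by rw [hrdef]; linarith
  have hd : 0 < s - r := by linarith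
  have hπ := Real.pi_pos
  have hpt : ∀ t ∈ Ioc p q, poisson z t ≤ (1 / Real.pi) * z.im / (s - r) ^ 2 := by
    intro t ht
    have h1 : |t - x₀| ≤ r := by
      rw [abs_le, hx₀, hrdef]
      constructor <;> [linarith [ht.1]; linarith [ht.2]]
    have h2 : s ≤ ‖z - (t : ℂ)‖ + r := by
      have h3 : z - (x₀ : ℂ) = (z - (t : ℂ)) + (((t - x₀ : ℝ) : ℂ)) := by
        push_cast; ring
      calc s = ‖(z - (t : ℂ)) + ((t - x₀ : ℝ) : ℂ)‖ := by rw [hsdef, h3]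
      _ ≤ ‖z - (t : ℂ)‖ + ‖((t - x₀ : ℝ) : ℂ)‖ :=
          norm_add_le _ _
      _ ≤ ‖z - (t : ℂ)‖ + r := by
          rw [Complex.norm_real, Real.norm_eq_abs]; linarith
    have h3 : (s - r) ^ 2 ≤ (t - z.re) ^ 2 + z.im ^ 2 := by
      have h4 : ‖z - (t : ℂ)‖ ^ 2 = (z.re - t) ^ 2 + z.im ^ 2 :=
        sq_abs_sub z t
      have h5 : (s - r) ^ 2 ≤ ‖z - (t : ℂ)‖ ^ 2 := by
        apply pow_le_pow_left₀ hd.le (by linarith)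
      rw [h4] at h5
      calc (s - r) ^ 2 ≤ (z.re - t) ^ 2 + z.im ^ 2 := h5
      _ = (t - z.re) ^ 2 + z.im ^ 2 := by ring
    unfold poisson
    exact div_le_div_of_nonneg_left (by positivity) (by positivity) h3
  calc ∫ t in Ioc p q, poisson z t
      ≤ ∫ _t in Ioc p q, (1 / Real.pi) * z.im / (s - r) ^ 2 :=
        setIntegral_mono_on (poisson_intOn hy)
          (integrableOn_const measure_Ioc_lt_top.ne) measurableSet_Ioc hpt
  _ = (q - p) * ((1 / Real.pi) * z.im / (s - r) ^ 2) := by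
        rw [setIntegral_const, measureReal_def, Real.volume_Ioc, smul_eq_mul,
          ENNReal.toReal_ofReal (by linarith)]

end BalAux

/-- Theorem `th:cup`: if `μ` satisfies the Blaschke condition near infinity in the upper
half-plane, then its balayage `μ^bal` out of the upper half-plane is finite on compact
sets, and for all `t₁ < t₂` with `t₁·t₂ ≥ 0` and every `a ∈ (0,1)`, with `x₀ = (t₁+t₂)/2`,
`r = (t₂-t₁)/2`, `E = (t₁,t₂]` if `t₁ ≥ 0` and `E = [t₁,t₂)` if `t₂ ≤ 0`, and `μ̄` the
restriction of `μ` to the closed upper half-plane, one has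
`μ^bal(E) ≤ μ̄(D̄(x₀,r)) + (2r/(a|x₀|))·μ̄(D̄(0, 3|x₀|/a))
  + (r/(1-a)²)·∫_{Im z ≥ 0, |z| ≥ |x₀|} Im z/|z|² dμ
  + r·max(0, ∫_r^{a|x₀|} μ̄(D̄(x₀,t))/t² dt)`. -/
theorem balUHP_estimate_of_blaschke
    (μ : Measure ℂ) [IsFiniteMeasureOnCompacts μ]
    (hB : ∃ r₀ > (0 : ℝ),
      (∫⁻ z in {z : ℂ | 0 < z.im ∧ r₀ ≤ ‖z‖},
        ENNReal.ofReal (z.im / ‖z‖ ^ 2) ∂μ) < ⊤) :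
    (∀ K : Set ℂ, IsCompact K → balUHP μ K < ⊤) ∧
    (∀ t₁ t₂ a : ℝ, t₁ < t₂ → 0 ≤ t₁ * t₂ → a ∈ Ioo (0 : ℝ) 1 →
      balUHP μ ((fun t : ℝ => (t : ℂ)) ''
          (if 0 ≤ t₁ then Ioc t₁ t₂ else Ico t₁ t₂))
        ≤ μ.restrict {z : ℂ | 0 ≤ z.im}
              {w : ℂ | ‖w - (((t₁ + t₂) / 2 : ℝ) : ℂ)‖ ≤ (t₂ - t₁) / 2}
          + ENNReal.ofReal (2 * ((t₂ - t₁) / 2) / (a * |(t₁ + t₂) / 2|)) *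
              μ.restrict {z : ℂ | 0 ≤ z.im}
                {w : ℂ | ‖w‖ ≤ 3 * |(t₁ + t₂) / 2| / a}
          + ENNReal.ofReal (((t₂ - t₁) / 2) / (1 - a) ^ 2) *
              (∫⁻ z in {z : ℂ | 0 ≤ z.im ∧ |(t₁ + t₂) / 2| ≤ ‖z‖},
                ENNReal.ofReal (z.im / ‖z‖ ^ 2) ∂μ)
          + ENNReal.ofReal (((t₂ - t₁) / 2) * max 0
              (∫ t in Ioc ((t₂ - t₁) / 2) (a * |(t₁ + t₂) / 2|),
                (μ.restrict {z : ℂ | 0 ≤ z.im}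
                    {w : ℂ | ‖w - (((t₁ + t₂) / 2 : ℝ) : ℂ)‖ ≤ t}).toReal
                  / t ^ 2))) := by
  constructor
  · intro K hK
    obtain ⟨r₀, hr₀, hBl⟩ := hB
    obtain ⟨R, hR⟩ := hK.isBounded.subset_closedBall 0
    set R2 : ℝ := max R 0 + 1 with hR2
    have hmax0 : (0:ℝ) ≤ max R 0 := le_max_right R 0
    have hR2pos : 0 < R2 := by rw [hR2]; linarith
    have hKsub : {t : ℝ | (t : ℂ) ∈ K} ⊆ Ioc (-R2) R2 := by
      intro t ht
      have h1 : ‖(t : ℂ) - 0‖ ≤ R := by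
        have := hR ht
        simpa [Metric.mem_closedBall, Complex.dist_eq] using this
      rw [sub_zero, Complex.norm_real, Real.norm_eq_abs] at h1
      have h2 : |t| ≤ max R 0 := le_trans h1 (le_max_left R 0)
      have h3 := abs_le.1 h2
      constructor
      · rw [hR2]; linarith [h3.1]
      · rw [hR2]; linarith [h3.2]
    set R3 : ℝ := max (2 * R2) r₀ with hR3
    have hR3pos : 0 < R3 := lt_of_lt_of_le (by linarith) (le_max_left _ _)
    have hπ := Real.pi_pos
    set C : ℝ := 2 * R2 * (4 / Real.pi) with hC
    have hC0 : 0 ≤ C := by rw [hC]; positivity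
    set S : Set ℂ := {z : ℂ | 0 < z.im} with hSdef
    set Bset : Set ℂ := {w : ℂ | ‖w‖ ≤ R3} with hBdef
    have hmeas1 : MeasurableSet Bset :=
      measurableSet_le continuous_norm.measurable measurable_const
    have hS : MeasurableSet S := measurableSet_lt measurable_const Complex.measurable_im
    have hpt : ∀ z ∈ S,
        ENNReal.ofReal (omegaUHP z K) ≤
          (Bset.indicator (fun _ => (1 : ℝ≥0∞)) z
            + Bsetᶜ.indicator
                (fun w => ENNReal.ofReal (C * (w.im / ‖w‖ ^ 2))) z) := by
      intro z hz
      have hy : 0 < z.im := hz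
      have homega : omegaUHP z K ≤ ∫ t in Ioc (-R2) R2, poisson z t := by
        unfold omegaUHP
        exact setIntegral_mono_set (BalAux.poisson_intOn hy)
          (Eventually.of_forall (BalAux.poisson_nonneg hy))
          (HasSubset.Subset.eventuallyLE hKsub)
      by_cases hcase : ‖z‖ ≤ R3
      · calc ENNReal.ofReal (omegaUHP z K) ≤ 1 :=
            ENNReal.ofReal_le_one.2 (homega.trans (BalAux.omega_le_one hy (by linarith)))
        _ = Bset.indicator (fun _ => (1 : ℝ≥0∞)) z :=
            (Set.indicator_of_mem (show z ∈ Bset from hcase) fun _ => (1:ℝ≥0∞)).symm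
        _ ≤ _ := le_self_add
      · push_neg at hcase
        have hz0 : 0 < ‖z‖ := lt_trans hR3pos hcase
        have habs : (((-R2 + R2) / 2 : ℝ) : ℂ) = 0 := by norm_num
        have hR2R3 : 2 * R2 ≤ R3 := le_max_left _ _
        have hs' : (R2 - -R2) / 2 < ‖z - (((-R2 + R2) / 2 : ℝ) : ℂ)‖ := by
          rw [habs, sub_zero]
          calc (R2 - -R2) / 2 = R2 := by ring
          _ < ‖z‖ := by linarith
        have hdec := BalAux.omega_le_decay hy (by linarith : -R2 ≤ R2) hs'
        rw [habs, sub_zero] at hdec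
        have hzR : 2 * R2 ≤ ‖z‖ := by linarith
        have hhalf : ‖z‖ / 2 ≤ ‖z‖ - R2 := by linarith
        have hsq : (‖z‖ / 2) ^ 2 ≤ (‖z‖ - R2) ^ 2 :=
          pow_le_pow_left₀ (by positivity) hhalf 2
        have hb2 : (1 / Real.pi) * z.im / (‖z‖ - R2) ^ 2
            ≤ (1 / Real.pi) * z.im / (‖z‖ / 2) ^ 2 :=
          div_le_div_of_nonneg_left (by positivity) (by positivity) hsq
        have hfin : omegaUHP z K ≤ C * (z.im / ‖z‖ ^ 2) := by
          have he : ‖z‖ - (R2 - -R2) / 2 = ‖z‖ - R2 := by ring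
          rw [he] at hdec
          calc omegaUHP z K
              ≤ (R2 - -R2) * ((1 / Real.pi) * z.im / (‖z‖ - R2) ^ 2) :=
                homega.trans hdec
          _ = 2 * R2 * ((1 / Real.pi) * z.im / (‖z‖ - R2) ^ 2) := by ring
          _ ≤ 2 * R2 * ((1 / Real.pi) * z.im / (‖z‖ / 2) ^ 2) :=
              mul_le_mul_of_nonneg_left hb2 (by linarith)
          _ = C * (z.im / ‖z‖ ^ 2) := by
              rw [hC]; field_simp; ring
        calc ENNReal.ofReal (omegaUHP z K)
            ≤ ENNReal.ofReal (C * (z.im / ‖z‖ ^ 2)) :=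
              ENNReal.ofReal_le_ofReal hfin
        _ = Bsetᶜ.indicator (fun w => ENNReal.ofReal (C * (w.im / ‖w‖ ^ 2))) z :=
              (Set.indicator_of_mem (show z ∈ Bsetᶜ from hcase.not_ge)
                fun w => ENNReal.ofReal (C * (w.im / ‖w‖ ^ 2))).symm
        _ ≤ _ := le_add_self
    have hmeasf : Measurable fun w : ℂ => ENNReal.ofReal (C * (w.im / ‖w‖ ^ 2)) := by
      apply Measurable.ennreal_ofReal
      exact (measurable_const.mul ((Complex.measurable_im).div
        (continuous_norm.measurable.pow_const 2)))
    have hint : (∫⁻ z in S, ENNReal.ofReal (omegaUHP z K) ∂μ)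
        ≤ μ Bset + ENNReal.ofReal C *
            (∫⁻ z in {z : ℂ | 0 < z.im ∧ r₀ ≤ ‖z‖},
              ENNReal.ofReal (z.im / ‖z‖ ^ 2) ∂μ) := by
      calc (∫⁻ z in S, ENNReal.ofReal (omegaUHP z K) ∂μ)
          ≤ ∫⁻ z in S, (Bset.indicator (fun _ => (1 : ℝ≥0∞)) z
              + Bsetᶜ.indicator
                  (fun w => ENNReal.ofReal (C * (w.im / ‖w‖ ^ 2))) z) ∂μ :=
            setLIntegral_mono' hS hpt
      _ = (∫⁻ z in S, Bset.indicator (fun _ => (1 : ℝ≥0∞)) z ∂μ)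
            + ∫⁻ z in S, Bsetᶜ.indicator
                (fun w => ENNReal.ofReal (C * (w.im / ‖w‖ ^ 2))) z ∂μ :=
            lintegral_add_left ((measurable_const).indicator hmeas1) _
      _ ≤ μ Bset + ENNReal.ofReal C *
            (∫⁻ z in {z : ℂ | 0 < z.im ∧ r₀ ≤ ‖z‖},
              ENNReal.ofReal (z.im / ‖z‖ ^ 2) ∂μ) := by
          gcongr
          · rw [lintegral_indicator hmeas1, setLIntegral_one,
              Measure.restrict_apply hmeas1]
            exact measure_mono inter_subset_left
          · rw [lintegral_indicator hmeas1.compl,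
              Measure.restrict_restrict hmeas1.compl]
            have hsub2 : Bsetᶜ ∩ S ⊆ {z : ℂ | 0 < z.im ∧ r₀ ≤ ‖z‖} := by
              rintro w ⟨hw1, hw2⟩
              have : R3 < ‖w‖ := by simpa [hBdef] using hw1
              exact ⟨hw2, le_trans (le_max_right _ _) this.le⟩
            calc (∫⁻ z in Bsetᶜ ∩ S,
                  ENNReal.ofReal (C * (z.im / ‖z‖ ^ 2)) ∂μ)
                = ENNReal.ofReal C * ∫⁻ z in Bsetᶜ ∩ S,
                    ENNReal.ofReal (z.im / ‖z‖ ^ 2) ∂μ := by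
                  simp_rw [ENNReal.ofReal_mul hC0]
                  exact lintegral_const_mul _ (by
                    exact (Complex.measurable_im.div
                      (continuous_norm.measurable.pow_const 2)).ennreal_ofReal)
            _ ≤ _ := by
                  gcongr
    have hball : μ Bset < ⊤ := by
      have : Bset = Metric.closedBall 0 R3 := by
        ext w; simp [hBdef, Metric.mem_closedBall, Complex.dist_eq]
      rw [this]
      exact (isCompact_closedBall 0 R3).measure_lt_top
    have h2 : μ (K ∩ {z : ℂ | z.im ≤ 0}) < ⊤ :=
      lt_of_le_of_lt (measure_mono inter_subset_left) hK.measure_lt_top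
    unfold balUHP
    exact ENNReal.add_lt_top.2 ⟨lt_of_le_of_lt hint
      (ENNReal.add_lt_top.2 ⟨hball, ENNReal.mul_lt_top ENNReal.ofReal_lt_top hBl⟩), h2⟩
  · intro t₁ t₂ a h12 hprod ha
    obtain ⟨ha0, ha1⟩ := ha
    set x₀ : ℝ := (t₁ + t₂) / 2 with hx₀def
    set r : ℝ := (t₂ - t₁) / 2 with hrdef
    have hπ := Real.pi_pos
    have hr : 0 < r := by rw [hrdef]; linarith
    have hrx : r ≤ |x₀| := by
      have h1 : r ^ 2 ≤ x₀ ^ 2 := by rw [hrdef, hx₀def]; nlinarith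
      nlinarith [abs_nonneg x₀, sq_abs x₀]
    have hx0 : 0 < |x₀| := lt_of_lt_of_le hr hrx
    set a' : ℝ := a * |x₀| with ha'def
    have ha'0 : 0 < a' := mul_pos ha0 hx0
    set S : Set ℂ := {z : ℂ | 0 < z.im} with hSdef
    set Sc : Set ℂ := {z : ℂ | 0 ≤ z.im} with hScdef
    have hSsub : S ⊆ Sc := fun z hz => le_of_lt (show 0 < z.im from hz)
    set E : Set ℂ := (fun t : ℝ => (t : ℂ)) ''
        (if 0 ≤ t₁ then Ioc t₁ t₂ else Ico t₁ t₂) with hEdef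
    -- measurability of basic sets
    have hSmeas : MeasurableSet S := measurableSet_lt measurable_const Complex.measurable_im
    have hScmeas : MeasurableSet Sc := measurableSet_le measurable_const Complex.measurable_im
    have habscont : Continuous fun w : ℂ => ‖w - (x₀ : ℂ)‖ :=
      continuous_norm.comp (continuous_id.sub continuous_const)
    have hDmeas : ∀ t : ℝ, MeasurableSet {w : ℂ | ‖w - (x₀ : ℂ)‖ ≤ t} :=
      fun t => measurableSet_le habscont.measurable measurable_const
    have hDball : ∀ t : ℝ, {w : ℂ | ‖w - (x₀ : ℂ)‖ ≤ t}
        = Metric.closedBall ((x₀ : ℝ) : ℂ) t := by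
      intro t; ext w; simp [Metric.mem_closedBall, Complex.dist_eq]
    have hDfin : ∀ t : ℝ, μ.restrict Sc {w : ℂ | ‖w - (x₀ : ℂ)‖ ≤ t} ≠ ⊤ := by
      intro t
      rw [Measure.restrict_apply (hDmeas t)]
      refine ne_of_lt (lt_of_le_of_lt (measure_mono inter_subset_left) ?_)
      rw [hDball t]; exact (isCompact_closedBall _ t).measure_lt_top
    have hB3meas : MeasurableSet {w : ℂ | ‖w‖ ≤ 3 * |x₀| / a} :=
      measurableSet_le continuous_norm.measurable measurable_const
    have hA3meas : MeasurableSet {w : ℂ | |x₀| ≤ ‖w‖} :=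
      measurableSet_le measurable_const continuous_norm.measurable
    -- the trace of E
    have htrace : ∀ z : ℂ, omegaUHP z E = ∫ t in Ioc t₁ t₂, poisson z t := by
      intro z
      unfold omegaUHP
      have hpre : {t : ℝ | (t : ℂ) ∈ E} = (if 0 ≤ t₁ then Ioc t₁ t₂ else Ico t₁ t₂) := by
        rw [hEdef]
        exact Set.preimage_image_eq _ Complex.ofReal_injective
      rw [hpre]
      split_ifs with h
      · rfl
      · rw [Measure.restrict_congr_set Ico_ae_eq_Ioc]
    have hEim : ∀ w ∈ E, w.im = 0 := by
      rintro w ⟨t, _, rfl⟩; exact Complex.ofReal_im t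
    have hμE : E ∩ {z : ℂ | z.im ≤ 0} = E :=
      inter_eq_left.2 fun w hw => le_of_eq (hEim w hw)
    have hEDr : E ⊆ {w : ℂ | ‖w - (x₀ : ℂ)‖ ≤ r} := by
      rintro w ⟨t, ht, rfl⟩
      have ht' : t₁ ≤ t ∧ t ≤ t₂ := by
        split_ifs at ht
        · exact ⟨ht.1.le, ht.2⟩
        · exact ⟨ht.1, ht.2.le⟩
      show ‖(t : ℂ) - (x₀ : ℂ)‖ ≤ r
      rw [← Complex.ofReal_sub, Complex.norm_real, Real.norm_eq_abs, abs_le]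
      constructor
      · rw [hx₀def, hrdef]; linarith [ht'.1]
      · rw [hx₀def, hrdef]; linarith [ht'.2]
    -- the kernel for the tail term
    set f : ℂ → ℝ → ℝ≥0∞ := fun z t =>
      if ‖z - (x₀ : ℂ)‖ ≤ t then ENNReal.ofReal (r / t ^ 2) else 0 with hfdef
    have hfm : Measurable fun p : ℂ × ℝ => f p.1 p.2 := by
      rw [hfdef]
      apply Measurable.ite
      · exact measurableSet_le
          ((habscont.comp continuous_fst).measurable) measurable_snd
      · exact (measurable_const.div ((measurable_snd.pow_const 2))).ennreal_ofReal
      · exact measurable_const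
    have hFm : Measurable fun z : ℂ => ∫⁻ t in Ioc r a', f z t :=
      Measurable.lintegral_prod_right' (f := fun p : ℂ × ℝ => f p.1 p.2) hfm
    -- the pointwise bound
    have hpt : ∀ z ∈ S, ENNReal.ofReal (omegaUHP z E)
        ≤ {w : ℂ | ‖w - (x₀ : ℂ)‖ ≤ r}.indicator (fun _ => (1 : ℝ≥0∞)) z
          + {w : ℂ | ‖w‖ ≤ 3 * |x₀| / a}.indicator
              (fun _ => ENNReal.ofReal (2 * r / a')) z
          + {w : ℂ | |x₀| ≤ ‖w‖}.indicator
              (fun w => ENNReal.ofReal ((r / (1 - a) ^ 2) * (w.im / ‖w‖ ^ 2))) z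
          + ∫⁻ t in Ioc r a', f z t := by
      intro z hz
      have hy : 0 < z.im := hz
      rw [htrace z]
      rcases le_or_gt (‖z - (x₀ : ℂ)‖) r with hsr | hsr
      · calc ENNReal.ofReal (∫ t in Ioc t₁ t₂, poisson z t) ≤ 1 :=
            ENNReal.ofReal_le_one.2 (BalAux.omega_le_one hy h12.le)
        _ = {w : ℂ | ‖w - (x₀ : ℂ)‖ ≤ r}.indicator (fun _ => (1 : ℝ≥0∞)) z :=
            (Set.indicator_of_mem
              (show z ∈ {w : ℂ | ‖w - (x₀ : ℂ)‖ ≤ r} from hsr)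
              fun _ => (1 : ℝ≥0∞)).symm
        _ ≤ _ := le_add_right (le_add_right (le_add_right le_rfl))
      · have hs0 : 0 < ‖z - (x₀ : ℂ)‖ := lt_trans hr hsr
        have homle : (∫ t in Ioc t₁ t₂, poisson z t) ≤ r / ‖z - (x₀ : ℂ)‖ :=
          BalAux.omega_le_div hy hr hsr.le
        have htri : ‖z‖ ≤ ‖z - (x₀ : ℂ)‖ + |x₀| := by
          calc ‖z‖ = ‖(z - (x₀ : ℂ)) + (x₀ : ℂ)‖ := by ring_nf
          _ ≤ ‖z - (x₀ : ℂ)‖ + ‖((x₀ : ℝ) : ℂ)‖ :=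
              norm_add_le _ _
          _ = ‖z - (x₀ : ℂ)‖ + |x₀| := by rw [Complex.norm_real, Real.norm_eq_abs]
        rcases le_or_gt (‖z - (x₀ : ℂ)‖) a' with hsa' | hsa'
        · -- middle region
          have hra' : r < a' := lt_of_lt_of_le hsr hsa'
          have h1 : (0:ℝ) ≤ r / a' := by positivity
          have h2 : (0:ℝ) ≤ r / ‖z - (x₀ : ℂ)‖ - r / a' := by
            have := div_le_div_of_nonneg_left hr.le hs0 hsa'
            linarith
          have hmem2 : z ∈ {w : ℂ | ‖w‖ ≤ 3 * |x₀| / a} := by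
            show ‖z‖ ≤ 3 * |x₀| / a
            have h3 : ‖z‖ ≤ a' + |x₀| := by linarith
            rw [le_div_iff₀ ha0]
            rw [ha'def] at h3
            nlinarith [hx0.le]
          have hFz : ENNReal.ofReal (r / ‖z - (x₀ : ℂ)‖ - r / a')
              ≤ ∫⁻ t in Ioc r a', f z t := by
            set s : ℝ := ‖z - (x₀ : ℂ)‖ with hsd
            have hcongr : ∫⁻ t in Ioc s a', f z t
                = ∫⁻ t in Ioc s a', ENNReal.ofReal (r / t ^ 2) := by
              apply setLIntegral_congr_fun measurableSet_Ioc
              intro t ht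
              rw [hfdef]
              exact if_pos ht.1.le
            have hcont : ContinuousOn (fun t : ℝ => r / t ^ 2) (Icc s a') := by
              apply ContinuousOn.div continuousOn_const
                ((continuous_pow 2).continuousOn)
              intro t ht
              exact pow_ne_zero 2 (ne_of_gt (lt_of_lt_of_le hs0 ht.1))
            have hIntOn : IntegrableOn (fun t : ℝ => r / t ^ 2) (Ioc s a') :=
              (hcont.integrableOn_compact isCompact_Icc).mono_set Ioc_subset_Icc_self
            have hval : ∫ t in Ioc s a', r / t ^ 2 = r / s - r / a' := by
              rw [← intervalIntegral.integral_of_le hsa']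
              have hder : ∀ u ∈ Set.uIcc s a', HasDerivAt (fun t : ℝ => -(r / t))
                  (r / u ^ 2) u := by
                intro u hu
                rw [Set.uIcc_of_le hsa'] at hu
                have hu0 : u ≠ 0 := ne_of_gt (lt_of_lt_of_le hs0 hu.1)
                have h := ((hasDerivAt_inv hu0).const_mul r).neg
                have heq : -(r * -(u ^ 2)⁻¹) = r / u ^ 2 := by field_simp
                rw [heq] at h
                exact h.congr_of_eventuallyEq
                  (Eventually.of_forall fun t => by simp [div_eq_mul_inv])
              have hii : IntervalIntegrable (fun t : ℝ => r / t ^ 2) volume s a' := by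
                apply ContinuousOn.intervalIntegrable
                rw [Set.uIcc_of_le hsa']
                exact hcont
              rw [intervalIntegral.integral_eq_sub_of_hasDerivAt hder hii]
              ring
            calc ENNReal.ofReal (r / s - r / a')
                = ENNReal.ofReal (∫ t in Ioc s a', r / t ^ 2) := by rw [hval]
            _ = ∫⁻ t in Ioc s a', ENNReal.ofReal (r / t ^ 2) :=
                ofReal_integral_eq_lintegral_ofReal hIntOn
                  (ae_of_all _ fun t => by positivity)
            _ = ∫⁻ t in Ioc s a', f z t := hcongr.symm
            _ ≤ ∫⁻ t in Ioc r a', f z t := lintegral_mono_set (Ioc_subset_Ioc_left hsr.le)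
          calc ENNReal.ofReal (∫ t in Ioc t₁ t₂, poisson z t)
              ≤ ENNReal.ofReal (r / a' + (r / ‖z - (x₀ : ℂ)‖ - r / a')) := by
                apply ENNReal.ofReal_le_ofReal
                linarith
          _ = ENNReal.ofReal (r / a')
                + ENNReal.ofReal (r / ‖z - (x₀ : ℂ)‖ - r / a') :=
              ENNReal.ofReal_add h1 h2
          _ ≤ {w : ℂ | ‖w‖ ≤ 3 * |x₀| / a}.indicator
                (fun _ => ENNReal.ofReal (2 * r / a')) z
              + ∫⁻ t in Ioc r a', f z t := by
              apply add_le_add _ hFz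
              rw [Set.indicator_of_mem hmem2]
              apply ENNReal.ofReal_le_ofReal
              apply (div_le_div_iff_of_pos_right ha'0).2
              linarith
          _ ≤ _ := by
              apply add_le_add _ le_rfl
              exact le_add_right le_add_self
        · -- outer region
          rcases le_or_gt (‖z‖) (3 * |x₀| / a) with hz3 | hz3
          · calc ENNReal.ofReal (∫ t in Ioc t₁ t₂, poisson z t)
                ≤ ENNReal.ofReal (2 * r / a') := by
                  apply ENNReal.ofReal_le_ofReal
                  have h4 : r / ‖z - (x₀ : ℂ)‖ ≤ r / a' :=
                    div_le_div_of_nonneg_left hr.le ha'0 hsa'.le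
                  have h5 : r / a' ≤ 2 * r / a' := by
                    apply (div_le_div_iff_of_pos_right ha'0).2; linarith
                  linarith
            _ = {w : ℂ | ‖w‖ ≤ 3 * |x₀| / a}.indicator
                  (fun _ => ENNReal.ofReal (2 * r / a')) z :=
                (Set.indicator_of_mem
                  (show z ∈ {w : ℂ | ‖w‖ ≤ 3 * |x₀| / a} from hz3)
                  fun _ => ENNReal.ofReal (2 * r / a')).symm
            _ ≤ _ := le_add_right (le_add_right le_add_self)
          · have hz0 : 0 < ‖z‖ := lt_trans (by positivity) hz3
            have hmem3 : z ∈ {w : ℂ | |x₀| ≤ ‖w‖} := by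
              show |x₀| ≤ ‖z‖
              have h6 : |x₀| ≤ 3 * |x₀| / a := by
                rw [le_div_iff₀ ha0]; nlinarith [hx0.le]
              linarith
            have hx₀lt : 3 * |x₀| < a * ‖z‖ := by
              rw [div_lt_iff₀ ha0] at hz3
              linarith [hz3]
            have hsz : (1 - a) * ‖z‖
                ≤ ‖z - (x₀ : ℂ)‖ - r := by
              nlinarith [htri, hrx, mul_nonneg ha0.le hz0.le]
            have hdec := BalAux.omega_le_decay hy h12.le hsr
            have hd0 : 0 < ‖z - (x₀ : ℂ)‖ - r := by linarith
            have h2r : t₂ - t₁ = 2 * r := by rw [hrdef]; ring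
            have h1a : (0:ℝ) < 1 - a := by linarith
            have hval : (t₂ - t₁) * ((1 / Real.pi) * z.im
                  / (‖z - (x₀ : ℂ)‖ - r) ^ 2)
                ≤ (r / (1 - a) ^ 2) * (z.im / ‖z‖ ^ 2) := by
              have hzim : 0 ≤ z.im := hy.le
              have hsq : ((1 - a) * ‖z‖) ^ 2
                  ≤ (‖z - (x₀ : ℂ)‖ - r) ^ 2 :=
                pow_le_pow_left₀ (mul_nonneg h1a.le hz0.le) hsz 2
              have h5 : (1 / Real.pi) * z.im / (‖z - (x₀ : ℂ)‖ - r) ^ 2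
                  ≤ (1 / Real.pi) * z.im / ((1 - a) * ‖z‖) ^ 2 :=
                div_le_div_of_nonneg_left (by positivity) (by positivity) hsq
              have h6 : 2 * r * ((1 / Real.pi) * z.im / ((1 - a) * ‖z‖) ^ 2)
                  = (2 / Real.pi) * ((r / (1 - a) ^ 2) * (z.im / ‖z‖ ^ 2)) := by
                field_simp
              have h7 : 2 / Real.pi ≤ 1 := by
                rw [div_le_one hπ]
                have := Real.pi_gt_three
                linarith
              have h8 : 0 ≤ (r / (1 - a) ^ 2) * (z.im / ‖z‖ ^ 2) := by positivity
              calc (t₂ - t₁) * ((1 / Real.pi) * z.im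
                    / (‖z - (x₀ : ℂ)‖ - r) ^ 2)
                  = 2 * r * ((1 / Real.pi) * z.im
                    / (‖z - (x₀ : ℂ)‖ - r) ^ 2) := by rw [h2r]
              _ ≤ 2 * r * ((1 / Real.pi) * z.im / ((1 - a) * ‖z‖) ^ 2) :=
                  mul_le_mul_of_nonneg_left h5 (by linarith)
              _ = (2 / Real.pi) * ((r / (1 - a) ^ 2) * (z.im / ‖z‖ ^ 2)) := h6
              _ ≤ 1 * ((r / (1 - a) ^ 2) * (z.im / ‖z‖ ^ 2)) :=
                  mul_le_mul_of_nonneg_right h7 h8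
              _ = (r / (1 - a) ^ 2) * (z.im / ‖z‖ ^ 2) := one_mul _
            calc ENNReal.ofReal (∫ t in Ioc t₁ t₂, poisson z t)
                ≤ ENNReal.ofReal ((r / (1 - a) ^ 2) * (z.im / ‖z‖ ^ 2)) :=
                ENNReal.ofReal_le_ofReal (le_trans hdec hval)
            _ = {w : ℂ | |x₀| ≤ ‖w‖}.indicator
                  (fun w => ENNReal.ofReal
                    ((r / (1 - a) ^ 2) * (w.im / ‖w‖ ^ 2))) z :=
                (Set.indicator_of_mem hmem3
                  fun w => ENNReal.ofReal
                    ((r / (1 - a) ^ 2) * (w.im / ‖w‖ ^ 2))).symm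
            _ ≤ _ := le_add_right le_add_self
    -- monotonicity and integrability of the tail measure function
    have hmono : Monotone fun t : ℝ =>
        μ.restrict Sc {w : ℂ | ‖w - (x₀ : ℂ)‖ ≤ t} :=
      fun t u htu => measure_mono fun w hw => le_trans hw htu
    have hmR : Monotone fun t : ℝ =>
        (μ.restrict Sc {w : ℂ | ‖w - (x₀ : ℂ)‖ ≤ t}).toReal :=
      fun t u htu => ENNReal.toReal_mono (hDfin u) (hmono htu)
    have hmmeas : Measurable fun t : ℝ =>
        (μ.restrict Sc {w : ℂ | ‖w - (x₀ : ℂ)‖ ≤ t}).toReal :=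
      hmR.measurable
    have hIntm : IntegrableOn (fun t : ℝ =>
        r * ((μ.restrict Sc {w : ℂ | ‖w - (x₀ : ℂ)‖ ≤ t}).toReal / t ^ 2))
        (Ioc r a') := by
      apply Integrable.mono' (g := fun _ : ℝ =>
        r * ((μ.restrict Sc {w : ℂ | ‖w - (x₀ : ℂ)‖ ≤ a'}).toReal / r ^ 2))
      · exact integrableOn_const measure_Ioc_lt_top.ne
      · exact ((hmmeas.div (measurable_id.pow_const 2)).const_mul r).aestronglyMeasurable
      · rw [ae_restrict_iff' measurableSet_Ioc]
        apply ae_of_all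
        intro t ht
        rw [Real.norm_eq_abs, abs_of_nonneg
          (mul_nonneg hr.le (div_nonneg ENNReal.toReal_nonneg (sq_nonneg t)))]
        apply mul_le_mul_of_nonneg_left _ hr.le
        exact div_le_div₀ ENNReal.toReal_nonneg (hmR ht.2) (by positivity)
          (pow_le_pow_left₀ hr.le ht.1.le 2)
    -- the tail term
    have hT4 : (∫⁻ z in S, ∫⁻ t in Ioc r a', f z t ∂(volume) ∂μ)
        ≤ ENNReal.ofReal (r * max 0
            (∫ t in Ioc r a',
              (μ.restrict Sc {w : ℂ | ‖w - (x₀ : ℂ)‖ ≤ t}).toReal / t ^ 2)) := by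
      have hswap : (∫⁻ z in S, ∫⁻ t in Ioc r a', f z t ∂(volume) ∂μ)
          = ∫⁻ t in Ioc r a', ∫⁻ z in S, f z t ∂μ ∂(volume) :=
        lintegral_lintegral_swap (μ := μ.restrict S)
          (ν := volume.restrict (Ioc r a')) hfm.aemeasurable
      rw [hswap]
      have hinner : ∀ t ∈ Ioc r a', (∫⁻ z in S, f z t ∂μ)
          ≤ ENNReal.ofReal (r *
              ((μ.restrict Sc {w : ℂ | ‖w - (x₀ : ℂ)‖ ≤ t}).toReal / t ^ 2)) := by
        intro t ht
        have heq : ∀ z : ℂ, f z t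
            = {w : ℂ | ‖w - (x₀ : ℂ)‖ ≤ t}.indicator
                (fun _ => ENNReal.ofReal (r / t ^ 2)) z := by
          intro z
          by_cases h : ‖z - (x₀ : ℂ)‖ ≤ t
          · rw [Set.indicator_of_mem
              (show z ∈ {w : ℂ | ‖w - (x₀ : ℂ)‖ ≤ t} from h)]
            exact if_pos h
          · rw [Set.indicator_of_notMem
              (show z ∉ {w : ℂ | ‖w - (x₀ : ℂ)‖ ≤ t} from h)]
            exact if_neg h
        calc (∫⁻ z in S, f z t ∂μ)
            = ∫⁻ z in S, {w : ℂ | ‖w - (x₀ : ℂ)‖ ≤ t}.indicator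
                (fun _ => ENNReal.ofReal (r / t ^ 2)) z ∂μ :=
              lintegral_congr fun z => heq z
        _ = ENNReal.ofReal (r / t ^ 2)
              * (μ.restrict S) {w : ℂ | ‖w - (x₀ : ℂ)‖ ≤ t} := by
              rw [lintegral_indicator (hDmeas t), setLIntegral_const]
        _ ≤ ENNReal.ofReal (r / t ^ 2)
              * (μ.restrict Sc) {w : ℂ | ‖w - (x₀ : ℂ)‖ ≤ t} := by
              gcongr
        _ = ENNReal.ofReal (r *
              ((μ.restrict Sc {w : ℂ | ‖w - (x₀ : ℂ)‖ ≤ t}).toReal / t ^ 2)) := by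
              rw [← ENNReal.ofReal_toReal (hDfin t),
                ← ENNReal.ofReal_mul (by positivity : (0:ℝ) ≤ r / t ^ 2)]
              rw [ENNReal.ofReal_toReal (hDfin t)]
              congr 1
              ring
      calc (∫⁻ t in Ioc r a', ∫⁻ z in S, f z t ∂μ ∂(volume))
          ≤ ∫⁻ t in Ioc r a', ENNReal.ofReal (r *
              ((μ.restrict Sc {w : ℂ | ‖w - (x₀ : ℂ)‖ ≤ t}).toReal / t ^ 2))
              ∂(volume) :=
            setLIntegral_mono' measurableSet_Ioc hinner
      _ = ENNReal.ofReal (∫ t in Ioc r a', r *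
              ((μ.restrict Sc {w : ℂ | ‖w - (x₀ : ℂ)‖ ≤ t}).toReal / t ^ 2)) :=
            (ofReal_integral_eq_lintegral_ofReal hIntm
              (ae_of_all _ fun t => mul_nonneg hr.le
                (div_nonneg ENNReal.toReal_nonneg (sq_nonneg t)))).symm
      _ ≤ ENNReal.ofReal (r * max 0
            (∫ t in Ioc r a',
              (μ.restrict Sc {w : ℂ | ‖w - (x₀ : ℂ)‖ ≤ t}).toReal / t ^ 2)) := by
            apply ENNReal.ofReal_le_ofReal
            rw [integral_const_mul]
            exact mul_le_mul_of_nonneg_left (le_max_right _ _) hr.le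
    -- the three indicator integrals
    have hT1 : (∫⁻ z in S, {w : ℂ | ‖w - (x₀ : ℂ)‖ ≤ r}.indicator
          (fun _ => (1 : ℝ≥0∞)) z ∂μ)
        = μ ({w : ℂ | ‖w - (x₀ : ℂ)‖ ≤ r} ∩ S) := by
      rw [lintegral_indicator (hDmeas r), setLIntegral_one, Measure.restrict_apply (hDmeas r)]
    have hT2 : (∫⁻ z in S, {w : ℂ | ‖w‖ ≤ 3 * |x₀| / a}.indicator
          (fun _ => ENNReal.ofReal (2 * r / a')) z ∂μ)
        ≤ ENNReal.ofReal (2 * r / a')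
            * μ.restrict Sc {w : ℂ | ‖w‖ ≤ 3 * |x₀| / a} := by
      rw [lintegral_indicator hB3meas, setLIntegral_const,
        Measure.restrict_apply hB3meas, Measure.restrict_apply hB3meas]
      exact mul_le_mul_right (measure_mono (inter_subset_inter_right _ hSsub)) _
    have hT3 : (∫⁻ z in S, {w : ℂ | |x₀| ≤ ‖w‖}.indicator
          (fun w => ENNReal.ofReal ((r / (1 - a) ^ 2) * (w.im / ‖w‖ ^ 2))) z ∂μ)
        ≤ ENNReal.ofReal (r / (1 - a) ^ 2)
            * ∫⁻ z in {z : ℂ | 0 ≤ z.im ∧ |x₀| ≤ ‖z‖},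
                ENNReal.ofReal (z.im / ‖z‖ ^ 2) ∂μ := by
      rw [lintegral_indicator hA3meas, Measure.restrict_restrict hA3meas]
      have h1a : (0:ℝ) < 1 - a := by linarith
      calc (∫⁻ z in {w : ℂ | |x₀| ≤ ‖w‖} ∩ S,
              ENNReal.ofReal ((r / (1 - a) ^ 2) * (z.im / ‖z‖ ^ 2)) ∂μ)
          = ENNReal.ofReal (r / (1 - a) ^ 2)
              * ∫⁻ z in {w : ℂ | |x₀| ≤ ‖w‖} ∩ S,
                  ENNReal.ofReal (z.im / ‖z‖ ^ 2) ∂μ := by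
            simp_rw [ENNReal.ofReal_mul (by positivity : (0:ℝ) ≤ r / (1 - a) ^ 2)]
            exact lintegral_const_mul _
              ((Complex.measurable_im.div
                (continuous_norm.measurable.pow_const 2)).ennreal_ofReal)
      _ ≤ _ := by
            gcongr
            rintro w ⟨hw1, hw2⟩
            exact ⟨le_of_lt hw2, hw1⟩
    -- assembling the interior integral bound
    have hind2m : Measurable fun z : ℂ => {w : ℂ | ‖w‖ ≤ 3 * |x₀| / a}.indicator
        (fun _ => ENNReal.ofReal (2 * r / a')) z := measurable_const.indicator hB3meas
    have hind3m : Measurable fun z : ℂ => {w : ℂ | |x₀| ≤ ‖w‖}.indicator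
        (fun w => ENNReal.ofReal ((r / (1 - a) ^ 2) * (w.im / ‖w‖ ^ 2))) z :=
      ((measurable_const.mul (Complex.measurable_im.div
        (continuous_norm.measurable.pow_const 2))).ennreal_ofReal).indicator hA3meas
    have hmain : (∫⁻ z in S, ENNReal.ofReal (omegaUHP z E) ∂μ)
        ≤ μ ({w : ℂ | ‖w - (x₀ : ℂ)‖ ≤ r} ∩ S)
          + ENNReal.ofReal (2 * r / a')
              * μ.restrict Sc {w : ℂ | ‖w‖ ≤ 3 * |x₀| / a}
          + ENNReal.ofReal (r / (1 - a) ^ 2)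
              * (∫⁻ z in {z : ℂ | 0 ≤ z.im ∧ |x₀| ≤ ‖z‖},
                  ENNReal.ofReal (z.im / ‖z‖ ^ 2) ∂μ)
          + ENNReal.ofReal (r * max 0
              (∫ t in Ioc r a',
                (μ.restrict Sc {w : ℂ | ‖w - (x₀ : ℂ)‖ ≤ t}).toReal / t ^ 2)) := by
      calc (∫⁻ z in S, ENNReal.ofReal (omegaUHP z E) ∂μ)
          ≤ ∫⁻ z in S,
              ({w : ℂ | ‖w - (x₀ : ℂ)‖ ≤ r}.indicator (fun _ => (1 : ℝ≥0∞)) z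
                + {w : ℂ | ‖w‖ ≤ 3 * |x₀| / a}.indicator
                    (fun _ => ENNReal.ofReal (2 * r / a')) z
                + {w : ℂ | |x₀| ≤ ‖w‖}.indicator
                    (fun w => ENNReal.ofReal
                      ((r / (1 - a) ^ 2) * (w.im / ‖w‖ ^ 2))) z
                + ∫⁻ t in Ioc r a', f z t) ∂μ :=
            setLIntegral_mono' hSmeas hpt
      _ = (∫⁻ z in S, {w : ℂ | ‖w - (x₀ : ℂ)‖ ≤ r}.indicator
              (fun _ => (1 : ℝ≥0∞)) z ∂μ)
            + (∫⁻ z in S, {w : ℂ | ‖w‖ ≤ 3 * |x₀| / a}.indicator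
                (fun _ => ENNReal.ofReal (2 * r / a')) z ∂μ)
            + (∫⁻ z in S, {w : ℂ | |x₀| ≤ ‖w‖}.indicator
                (fun w => ENNReal.ofReal
                  ((r / (1 - a) ^ 2) * (w.im / ‖w‖ ^ 2))) z ∂μ)
            + (∫⁻ z in S, ∫⁻ t in Ioc r a', f z t ∂(volume) ∂μ) := by
            rw [lintegral_add_right _ hFm, lintegral_add_right _ hind3m,
              lintegral_add_right _ hind2m]
      _ ≤ _ := add_le_add (add_le_add (add_le_add hT1.le hT2) hT3) hT4
    -- the real-axis part joins the first ball term
    have hErest : μ ({w : ℂ | ‖w - (x₀ : ℂ)‖ ≤ r} ∩ S)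
          + μ (E ∩ {z : ℂ | z.im ≤ 0})
        ≤ μ.restrict Sc {w : ℂ | ‖w - (x₀ : ℂ)‖ ≤ r} := by
      rw [hμE, Measure.restrict_apply (hDmeas r)]
      have hdis : Disjoint E ({w : ℂ | ‖w - (x₀ : ℂ)‖ ≤ r} ∩ S) := by
        rw [Set.disjoint_left]
        rintro w hw ⟨_, hw2⟩
        have h1 := hEim w hw
        have h2 : (0:ℝ) < w.im := hw2
        linarith
      calc μ ({w : ℂ | ‖w - (x₀ : ℂ)‖ ≤ r} ∩ S) + μ E
          = μ E + μ ({w : ℂ | ‖w - (x₀ : ℂ)‖ ≤ r} ∩ S) := add_comm _ _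
      _ = μ (E ∪ ({w : ℂ | ‖w - (x₀ : ℂ)‖ ≤ r} ∩ S)) :=
          (measure_union hdis ((hDmeas r).inter hSmeas)).symm
      _ ≤ μ ({w : ℂ | ‖w - (x₀ : ℂ)‖ ≤ r} ∩ Sc) :=
          measure_mono (union_subset
            (fun w hw => ⟨hEDr hw, le_of_eq (hEim w hw).symm⟩)
            (inter_subset_inter_right _ hSsub))
    -- final assembly
    rw [show balUHP μ E = (∫⁻ z in S, ENNReal.ofReal (omegaUHP z E) ∂μ)
        + μ (E ∩ {z : ℂ | z.im ≤ 0}) from rfl]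
    calc (∫⁻ z in S, ENNReal.ofReal (omegaUHP z E) ∂μ) + μ (E ∩ {z : ℂ | z.im ≤ 0})
        ≤ (μ ({w : ℂ | ‖w - (x₀ : ℂ)‖ ≤ r} ∩ S)
            + ENNReal.ofReal (2 * r / a')
                * μ.restrict Sc {w : ℂ | ‖w‖ ≤ 3 * |x₀| / a}
            + ENNReal.ofReal (r / (1 - a) ^ 2)
                * (∫⁻ z in {z : ℂ | 0 ≤ z.im ∧ |x₀| ≤ ‖z‖},
                    ENNReal.ofReal (z.im / ‖z‖ ^ 2) ∂μ)
            + ENNReal.ofReal (r * max 0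
                (∫ t in Ioc r a',
                  (μ.restrict Sc {w : ℂ | ‖w - (x₀ : ℂ)‖ ≤ t}).toReal / t ^ 2)))
          + μ (E ∩ {z : ℂ | z.im ≤ 0}) := add_le_add hmain le_rfl
    _ = (μ ({w : ℂ | ‖w - (x₀ : ℂ)‖ ≤ r} ∩ S) + μ (E ∩ {z : ℂ | z.im ≤ 0}))
          + ENNReal.ofReal (2 * r / a')
              * μ.restrict Sc {w : ℂ | ‖w‖ ≤ 3 * |x₀| / a}
          + ENNReal.ofReal (r / (1 - a) ^ 2)
              * (∫⁻ z in {z : ℂ | 0 ≤ z.im ∧ |x₀| ≤ ‖z‖},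
                  ENNReal.ofReal (z.im / ‖z‖ ^ 2) ∂μ)
          + ENNReal.ofReal (r * max 0
              (∫ t in Ioc r a',
                (μ.restrict Sc {w : ℂ | ‖w - (x₀ : ℂ)‖ ≤ t}).toReal / t ^ 2)) := by
        ring
    _ ≤ _ := add_le_add (add_le_add (add_le_add hErest le_rfl) le_rfl) le_rfl
end

section
/- Let μ be a positive Borel measure on ℂ that is finite on compact sets. Then the following three assertions are pairwise equivalent: (b1) the balayage μ^bal of μ out of the upper half-plane is finite on every bounded Borel subset of ℂ; (b2) there exists a bounded Borel set B ⊆ ℝ of positive Lebesgue measure such that ∫_{{Im z > 0}} ω(z,B) dμ(z) < ∞; (b3) μ satisfies the Blaschke condition near infinity in the upper half-plane, i.e. ∫_{{Im z > 0, |z| ≥ r₀}} (Im z)/|z|² dμ(z) < ∞ for some r₀ > 0. -/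
open MeasureTheory Filter Set
open scoped ENNReal

/-! ### Auxiliary lemmas -/

lemma poisson_pos {z : ℂ} (hz : 0 < z.im) (t : ℝ) : 0 < poisson z t := by
  unfold poisson
  have : (0:ℝ) < (t - z.re) ^ 2 + z.im ^ 2 := by positivity
  positivity

lemma poisson_eq {z : ℂ} (hz : 0 < z.im) (t : ℝ) :
    poisson z t = (1/(Real.pi * z.im)) * (1 + ((t - z.re)/z.im) ^ 2)⁻¹ := by
  unfold poisson
  have h : (t - z.re) ^ 2 + z.im ^ 2 = z.im ^ 2 * (1 + ((t - z.re)/z.im) ^ 2) := by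
    field_simp; ring
  rw [h]
  have hπ := Real.pi_pos
  have h2 : (0:ℝ) < 1 + ((t - z.re)/z.im) ^ 2 := by positivity
  field_simp

lemma poisson_integrable {z : ℂ} (hz : 0 < z.im) : Integrable (poisson z) := by
  have h1 : Integrable (fun s : ℝ => (1 + (s / z.im) ^ 2)⁻¹) :=
    integrable_inv_one_add_sq.comp_div hz.ne'
  have h2 : Integrable (fun t : ℝ => (1 + ((t - z.re) / z.im) ^ 2)⁻¹) :=
    h1.comp_sub_right z.re
  exact (h2.const_mul (1/(Real.pi * z.im))).congr
    (by filter_upwards with t; rw [poisson_eq hz])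

lemma integral_poisson {z : ℂ} (hz : 0 < z.im) : ∫ t : ℝ, poisson z t = 1 := by
  have hπ := Real.pi_pos
  calc ∫ t : ℝ, poisson z t
      = ∫ t : ℝ, (1/(Real.pi * z.im)) * (1 + ((t - z.re)/z.im) ^ 2)⁻¹ := by
        congr 1; ext t; exact poisson_eq hz t
    _ = (1/(Real.pi * z.im)) * ∫ t : ℝ, (1 + ((t - z.re)/z.im) ^ 2)⁻¹ := by
        rw [integral_const_mul]
    _ = (1/(Real.pi * z.im)) * ∫ s : ℝ, (1 + (s/z.im) ^ 2)⁻¹ := by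
        rw [integral_sub_right_eq_self (fun s : ℝ => (1 + (s/z.im) ^ 2)⁻¹) z.re]
    _ = (1/(Real.pi * z.im)) * (|z.im| • ∫ u : ℝ, (1 + u ^ 2)⁻¹) := by
        rw [MeasureTheory.Measure.integral_comp_div (fun u : ℝ => (1 + u ^ 2)⁻¹) z.im]
    _ = 1 := by
        rw [integral_univ_inv_one_add_sq, abs_of_pos hz]
        simp [smul_eq_mul]
        field_simp

lemma sq_abs_eq (z : ℂ) : ‖z‖ ^ 2 = z.re ^ 2 + z.im ^ 2 := by
  rw [Complex.sq_norm, Complex.normSq_apply]; ring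

lemma poisson_le_far {z : ℂ} (hz : 0 < z.im) {R t : ℝ} (hR : 1 ≤ R) (ht : |t| ≤ R)
    (hfar : 3*R ≤ ‖z‖) :
    poisson z t ≤ (8/Real.pi) * (z.im / ‖z‖ ^ 2) := by
  have hπ := Real.pi_pos
  have hs2 := sq_abs_eq z
  have hs0 : (0:ℝ) < ‖z‖ := lt_of_lt_of_le (by linarith) hfar
  have h9 : 9*R^2 ≤ z.re^2 + z.im^2 := by nlinarith
  have ht2 : t^2 ≤ R^2 := by nlinarith [abs_nonneg t, _root_.sq_abs t, neg_abs_le t, le_abs_self t]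
  have hD : ‖z‖ ^ 2 / 8 ≤ (t - z.re)^2 + z.im^2 := by
    rw [hs2]; nlinarith [sq_nonneg (4*t - 2*z.re)]
  have hDpos : (0:ℝ) < ‖z‖ ^ 2 / 8 := by positivity
  calc poisson z t = (1/Real.pi) * z.im / ((t - z.re)^2 + z.im^2) := rfl
    _ ≤ (1/Real.pi) * z.im / (‖z‖ ^ 2 / 8) := by
        apply div_le_div_of_nonneg_left _ hDpos hD
        positivity
    _ = (8/Real.pi) * (z.im / ‖z‖ ^ 2) := by field_simp

lemma poisson_ge_near {z : ℂ} (hz : 0 < z.im) {R t : ℝ} (hR0 : 0 < R) (ht : |t| ≤ R)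
    (hfar : R ≤ ‖z‖) :
    (1/(5*Real.pi)) * (z.im / ‖z‖ ^ 2) ≤ poisson z t := by
  have hπ := Real.pi_pos
  have hs2 := sq_abs_eq z
  have hs0 : (0:ℝ) < ‖z‖ := lt_of_lt_of_le hR0 hfar
  have ht2 : t^2 ≤ R^2 := by nlinarith [abs_nonneg t, _root_.sq_abs t, neg_abs_le t, le_abs_self t]
  have ha : z.re^2 ≤ ‖z‖ ^ 2 := by nlinarith
  have hD : (t - z.re)^2 + z.im^2 ≤ 5 * ‖z‖ ^ 2 := by
    nlinarith [sq_nonneg (t + z.re)]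
  have hDpos : (0:ℝ) < (t - z.re)^2 + z.im^2 := by positivity
  calc (1/(5*Real.pi)) * (z.im / ‖z‖ ^ 2)
      = (1/Real.pi) * z.im / (5 * ‖z‖ ^ 2) := by
        rw [div_mul_div_comm, div_mul_eq_mul_div, ← div_div, div_div, div_div]; ring_nf
    _ ≤ (1/Real.pi) * z.im / ((t - z.re)^2 + z.im^2) := by
        apply div_le_div_of_nonneg_left _ hDpos hD
        positivity
    _ = poisson z t := rfl

lemma omega_le_one {z : ℂ} (hz : 0 < z.im) (B : Set ℂ) : omegaUHP z B ≤ 1 := by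
  unfold omegaUHP
  calc ∫ t in {t : ℝ | (t : ℂ) ∈ B}, poisson z t
      ≤ ∫ t, poisson z t :=
        setIntegral_le_integral (poisson_integrable hz)
          (Eventually.of_forall fun t => (poisson_pos hz t).le)
    _ = 1 := integral_poisson hz

lemma omega_le_far {z : ℂ} (hz : 0 < z.im) {B : Set ℂ} {R : ℝ} (hR : 1 ≤ R)
    (hT : {t : ℝ | (t : ℂ) ∈ B} ⊆ Icc (-R) R)
    (hmeas : MeasurableSet {t : ℝ | (t : ℂ) ∈ B})
    (hfar : 3*R ≤ ‖z‖) :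
    omegaUHP z B ≤ (16*R/Real.pi) * (z.im / ‖z‖ ^ 2) := by
  have hπ := Real.pi_pos
  have hs0 : (0:ℝ) < ‖z‖ := lt_of_lt_of_le (by linarith) hfar
  set T := {t : ℝ | (t : ℂ) ∈ B}
  have hvolIcc : volume (Icc (-R) R) = ENNReal.ofReal (2*R) := by
    rw [Real.volume_Icc]; congr 1; ring
  have hvol : volume T < ⊤ := lt_of_le_of_lt (measure_mono hT)
    (by rw [hvolIcc]; exact ENNReal.ofReal_lt_top)
  have hpt : ∀ t ∈ T, poisson z t ≤ (8/Real.pi) * (z.im / ‖z‖ ^ 2) := by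
    intro t htT
    exact poisson_le_far hz hR (abs_le.mpr ⟨(hT htT).1, (hT htT).2⟩) hfar
  have hc : (0:ℝ) ≤ (8/Real.pi) * (z.im / ‖z‖ ^ 2) := by positivity
  calc omegaUHP z B
      ≤ ∫ _ in T, (8/Real.pi) * (z.im / ‖z‖ ^ 2) :=
        setIntegral_mono_on ((poisson_integrable hz).integrableOn)
          (integrableOn_const hvol.ne) hmeas hpt
    _ = (volume T).toReal * ((8/Real.pi) * (z.im / ‖z‖ ^ 2)) := by
        rw [setIntegral_const, smul_eq_mul]; rfl
    _ ≤ (2*R) * ((8/Real.pi) * (z.im / ‖z‖ ^ 2)) := by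
        apply mul_le_mul_of_nonneg_right _ hc
        refine ENNReal.toReal_le_of_le_ofReal (by linarith) ?_
        rw [← hvolIcc]; exact measure_mono hT
    _ = (16*R/Real.pi) * (z.im / ‖z‖ ^ 2) := by ring

lemma omega_ge {z : ℂ} (hz : 0 < z.im) {B : Set ℝ} {R : ℝ} (hR0 : 0 < R)
    (hsub : B ⊆ Icc (-R) R) (hmeas : MeasurableSet B) (hvol : volume B < ⊤)
    (hfar : R ≤ ‖z‖) :
    (volume B).toReal * ((1/(5*Real.pi)) * (z.im / ‖z‖ ^ 2))
      ≤ ∫ t in B, poisson z t := by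
  have hpt : ∀ t ∈ B, (1/(5*Real.pi)) * (z.im / ‖z‖ ^ 2) ≤ poisson z t := by
    intro t htB
    exact poisson_ge_near hz hR0 (abs_le.mpr ⟨(hsub htB).1, (hsub htB).2⟩) hfar
  calc (volume B).toReal * ((1/(5*Real.pi)) * (z.im / ‖z‖ ^ 2))
      = ∫ _ in B, (1/(5*Real.pi)) * (z.im / ‖z‖ ^ 2) := by
        rw [setIntegral_const, smul_eq_mul]; rfl
    _ ≤ ∫ t in B, poisson z t :=
        setIntegral_mono_on (integrableOn_const hvol.ne)
          ((poisson_integrable hz).integrableOn) hmeas hpt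

lemma trace_image (B : Set ℝ) :
    {t : ℝ | (t : ℂ) ∈ ((fun t : ℝ => (t : ℂ)) '' B)} = B := by
  ext t
  simp only [mem_setOf_eq, mem_image]
  constructor
  · rintro ⟨s, hs, hst⟩
    rwa [← Complex.ofReal_inj.mp hst]
  · exact fun ht => ⟨t, ht, rfl⟩

lemma measurable_im_pos : MeasurableSet {z : ℂ | 0 < z.im} :=
  measurableSet_lt measurable_const Complex.measurable_im

lemma measurable_abs_ge (M : ℝ) : MeasurableSet {z : ℂ | M ≤ ‖z‖} :=
  measurableSet_le measurable_const continuous_norm.measurable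

/-- b3 implies b1. -/
lemma b3_to_b1 (μ : Measure ℂ) [IsFiniteMeasureOnCompacts μ]
    (h : ∃ r₀ > (0 : ℝ),
      (∫⁻ z in {z : ℂ | 0 < z.im ∧ r₀ ≤ ‖z‖},
        ENNReal.ofReal (z.im / ‖z‖ ^ 2) ∂μ) < ⊤) :
    ∀ B : Set ℂ, MeasurableSet B → Bornology.IsBounded B → balUHP μ B < ⊤ := by
  obtain ⟨r₀, hr₀, hbl⟩ := h
  intro B hBm hBb
  obtain ⟨R₀, hR₀⟩ := hBb.subset_closedBall 0
  set R : ℝ := max R₀ 1 with hRdef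
  have hR1 : (1:ℝ) ≤ R := le_max_right _ _
  set T := {t : ℝ | (t : ℂ) ∈ B} with hTdef
  have hTm : MeasurableSet T := Complex.measurable_ofReal hBm
  have hTsub : T ⊆ Icc (-R) R := by
    intro t ht
    have h1 : (t:ℂ) ∈ Metric.closedBall (0:ℂ) R₀ := hR₀ ht
    rw [Metric.mem_closedBall, dist_zero_right, Complex.norm_real, Real.norm_eq_abs] at h1
    have : |t| ≤ R := le_trans h1 (le_max_left _ _)
    exact abs_le.mp this |> fun ⟨a, b⟩ => ⟨a, b⟩
  set M : ℝ := max (3*R) r₀ with hMdef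
  -- second term
  have hterm2 : μ (B ∩ {z : ℂ | z.im ≤ 0}) < ⊤ := by
    refine lt_of_le_of_lt (measure_mono ?_) (isCompact_closedBall (0:ℂ) R₀).measure_lt_top
    exact (inter_subset_left).trans hR₀
  -- first term
  set s₁ := {z : ℂ | 0 < z.im} ∩ Metric.closedBall (0:ℂ) M with hs₁def
  set s₂ := {z : ℂ | 0 < z.im} ∩ {z : ℂ | M ≤ ‖z‖} with hs₂def
  have hcover : {z : ℂ | 0 < z.im} ⊆ s₁ ∪ s₂ := by
    intro z hz
    rcases le_total (‖z‖) M with hle | hge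
    · left
      exact ⟨hz, by rwa [Metric.mem_closedBall, dist_zero_right]⟩
    · right; exact ⟨hz, hge⟩
  have hs₁m : MeasurableSet s₁ := measurable_im_pos.inter Metric.isClosed_closedBall.measurableSet
  have hs₂m : MeasurableSet s₂ := measurable_im_pos.inter (measurable_abs_ge M)
  have hI1 : (∫⁻ z in s₁, ENNReal.ofReal (omegaUHP z B) ∂μ) < ⊤ := by
    have : (∫⁻ z in s₁, ENNReal.ofReal (omegaUHP z B) ∂μ) ≤ ∫⁻ _ in s₁, 1 ∂μ := by
      refine setLIntegral_mono' hs₁m fun z hzs => ?_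
      exact ENNReal.ofReal_le_one.mpr (omega_le_one hzs.1 B)
    refine lt_of_le_of_lt this ?_
    rw [setLIntegral_one]
    exact lt_of_le_of_lt (measure_mono inter_subset_right)
      (isCompact_closedBall (0:ℂ) M).measure_lt_top
  have hI2 : (∫⁻ z in s₂, ENNReal.ofReal (omegaUHP z B) ∂μ) < ⊤ := by
    have hstep : (∫⁻ z in s₂, ENNReal.ofReal (omegaUHP z B) ∂μ)
        ≤ ∫⁻ z in s₂, ENNReal.ofReal (16*R/Real.pi)
            * ENNReal.ofReal (z.im / ‖z‖ ^ 2) ∂μ := by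
      refine setLIntegral_mono' hs₂m fun z hzs => ?_
      have hfar : 3*R ≤ ‖z‖ := le_trans (le_max_left _ _) hzs.2
      have := omega_le_far hzs.1 hR1 hTsub hTm hfar
      calc ENNReal.ofReal (omegaUHP z B)
          ≤ ENNReal.ofReal ((16*R/Real.pi) * (z.im / ‖z‖ ^ 2)) :=
            ENNReal.ofReal_le_ofReal this
        _ = ENNReal.ofReal (16*R/Real.pi) * ENNReal.ofReal (z.im / ‖z‖ ^ 2) :=
            ENNReal.ofReal_mul (by positivity)
    refine lt_of_le_of_lt hstep ?_
    rw [lintegral_const_mul' _ _ ENNReal.ofReal_ne_top]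
    refine ENNReal.mul_lt_top ENNReal.ofReal_lt_top ?_
    refine lt_of_le_of_lt (lintegral_mono_set ?_) hbl
    intro z hzs
    exact ⟨hzs.1, le_trans (le_max_right _ _) hzs.2⟩
  have hterm1 : (∫⁻ z in {z : ℂ | 0 < z.im}, ENNReal.ofReal (omegaUHP z B) ∂μ) < ⊤ := by
    refine lt_of_le_of_lt (lintegral_mono_set hcover) ?_
    refine lt_of_le_of_lt (lintegral_union_le _ _ _) ?_
    exact ENNReal.add_lt_top.mpr ⟨hI1, hI2⟩
  exact ENNReal.add_lt_top.mpr ⟨hterm1, hterm2⟩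

/-- b1 implies b2. -/
lemma b1_to_b2 (μ : Measure ℂ)
    (h : ∀ B : Set ℂ, MeasurableSet B → Bornology.IsBounded B → balUHP μ B < ⊤) :
    ∃ B : Set ℝ, MeasurableSet B ∧ Bornology.IsBounded B ∧ 0 < volume B ∧
      (∫⁻ z in {z : ℂ | 0 < z.im},
        ENNReal.ofReal (omegaUHP z ((fun t : ℝ => (t : ℂ)) '' B)) ∂μ) < ⊤ := by
  refine ⟨Icc 0 1, measurableSet_Icc, Metric.isBounded_Icc 0 1, by simp, ?_⟩
  have hcomp : IsCompact ((fun t : ℝ => (t : ℂ)) '' Icc 0 1) :=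
    isCompact_Icc.image Complex.continuous_ofReal
  have hlt := h _ hcomp.isClosed.measurableSet hcomp.isBounded
  unfold balUHP at hlt
  exact lt_of_le_of_lt le_self_add hlt

/-- b2 implies b3. -/
lemma b2_to_b3 (μ : Measure ℂ)
    (h : ∃ B : Set ℝ, MeasurableSet B ∧ Bornology.IsBounded B ∧ 0 < volume B ∧
      (∫⁻ z in {z : ℂ | 0 < z.im},
        ENNReal.ofReal (omegaUHP z ((fun t : ℝ => (t : ℂ)) '' B)) ∂μ) < ⊤) :
    ∃ r₀ > (0 : ℝ),
      (∫⁻ z in {z : ℂ | 0 < z.im ∧ r₀ ≤ ‖z‖},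
        ENNReal.ofReal (z.im / ‖z‖ ^ 2) ∂μ) < ⊤ := by
  obtain ⟨B, hBm, hBb, hBvol, hBint⟩ := h
  have hπ := Real.pi_pos
  obtain ⟨R₀, hR₀⟩ := hBb.subset_closedBall 0
  set R : ℝ := max R₀ 1 with hRdef
  have hR1 : (1:ℝ) ≤ R := le_max_right _ _
  have hR0 : (0:ℝ) < R := lt_of_lt_of_le one_pos hR1
  have hsub : B ⊆ Icc (-R) R := by
    intro t ht
    have h1 := hR₀ ht
    rw [Metric.mem_closedBall, dist_zero_right, Real.norm_eq_abs] at h1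
    have : |t| ≤ R := le_trans h1 (le_max_left _ _)
    exact abs_le.mp this |> fun ⟨a, b⟩ => ⟨a, b⟩
  have hvolfin : volume B < ⊤ := lt_of_le_of_lt (measure_mono hsub)
    (by rw [Real.volume_Icc]; exact ENNReal.ofReal_lt_top)
  set c₀ : ℝ := (volume B).toReal with hc₀def
  have hc₀pos : 0 < c₀ := ENNReal.toReal_pos hBvol.ne' hvolfin.ne
  set c : ℝ := c₀ * (1/(5*Real.pi)) with hcdef
  have hcpos : 0 < c := by positivity
  refine ⟨R, hR0, ?_⟩
  set s' := {z : ℂ | 0 < z.im ∧ R ≤ ‖z‖} with hs'def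
  have hs'm : MeasurableSet s' := by
    have : s' = {z : ℂ | 0 < z.im} ∩ {z : ℂ | R ≤ ‖z‖} := rfl
    rw [this]; exact measurable_im_pos.inter (measurable_abs_ge R)
  have hstep : (∫⁻ z in s', ENNReal.ofReal (z.im / ‖z‖ ^ 2) ∂μ)
      ≤ ∫⁻ z in s', ENNReal.ofReal c⁻¹
          * ENNReal.ofReal (omegaUHP z ((fun t : ℝ => (t : ℂ)) '' B)) ∂μ := by
    refine setLIntegral_mono' hs'm fun z hzs => ?_
    obtain ⟨hzim, hzfar⟩ := hzs
    have hω : c * (z.im / ‖z‖ ^ 2) ≤ omegaUHP z ((fun t : ℝ => (t : ℂ)) '' B) := by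
      have := omega_ge hzim hR0 hsub hBm hvolfin hzfar
      unfold omegaUHP
      rw [trace_image]
      calc c * (z.im / ‖z‖ ^ 2)
          = c₀ * ((1/(5*Real.pi)) * (z.im / ‖z‖ ^ 2)) := by rw [hcdef]; ring
        _ ≤ ∫ t in B, poisson z t := this
    calc ENNReal.ofReal (z.im / ‖z‖ ^ 2)
        = ENNReal.ofReal (c⁻¹ * (c * (z.im / ‖z‖ ^ 2))) := by
          congr 1; field_simp
      _ ≤ ENNReal.ofReal (c⁻¹ * omegaUHP z ((fun t : ℝ => (t : ℂ)) '' B)) := by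
          apply ENNReal.ofReal_le_ofReal
          exact mul_le_mul_of_nonneg_left hω (by positivity)
      _ = ENNReal.ofReal c⁻¹ * ENNReal.ofReal (omegaUHP z ((fun t : ℝ => (t : ℂ)) '' B)) :=
          ENNReal.ofReal_mul (by positivity)
  refine lt_of_le_of_lt hstep ?_
  rw [lintegral_const_mul' _ _ ENNReal.ofReal_ne_top]
  refine ENNReal.mul_lt_top ENNReal.ofReal_lt_top ?_
  refine lt_of_le_of_lt (lintegral_mono_set fun z hzs => hzs.1) hBint

/-- Corollary `th:b0+`: for a positive measure `μ` on `ℂ`, finite on compact sets, the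
following are pairwise equivalent: (b1) the balayage `μ^bal` out of the upper half-plane
is finite on every bounded Borel set; (b2) `∫_{Im z>0} ω(z,B) dμ(z) < ∞` for some bounded
Borel set `B ⊆ ℝ` of positive Lebesgue measure; (b3) `μ` satisfies the Blaschke condition
near infinity in the upper half-plane. -/
theorem balUHP_finite_iff_blaschke
    (μ : Measure ℂ) [IsFiniteMeasureOnCompacts μ] :
    ((∀ B : Set ℂ, MeasurableSet B → Bornology.IsBounded B → balUHP μ B < ⊤) ↔
      (∃ B : Set ℝ, MeasurableSet B ∧ Bornology.IsBounded B ∧ 0 < volume B ∧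
        (∫⁻ z in {z : ℂ | 0 < z.im},
          ENNReal.ofReal (omegaUHP z ((fun t : ℝ => (t : ℂ)) '' B)) ∂μ) < ⊤)) ∧
    ((∃ B : Set ℝ, MeasurableSet B ∧ Bornology.IsBounded B ∧ 0 < volume B ∧
        (∫⁻ z in {z : ℂ | 0 < z.im},
          ENNReal.ofReal (omegaUHP z ((fun t : ℝ => (t : ℂ)) '' B)) ∂μ) < ⊤) ↔
      (∃ r₀ > (0 : ℝ),
        (∫⁻ z in {z : ℂ | 0 < z.im ∧ r₀ ≤ ‖z‖},
          ENNReal.ofReal (z.im / ‖z‖ ^ 2) ∂μ) < ⊤)) := by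
  constructor
  · exact ⟨fun h => b1_to_b2 μ h, fun h => b3_to_b1 μ (b2_to_b3 μ h)⟩
  · exact ⟨fun h => b2_to_b3 μ h, fun h => b1_to_b2 μ (b3_to_b1 μ h)⟩
end
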